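/- arXiv:1510.02197 — 10 statements merged into one kernel-verified Lean document; each statement's English description precedes it below -/
import Mathlib

section
/- Let G be a cycle graph with n edges e₁,...,e_n. Then every cost matrix Q for the QMSTP on G is linearizable, and a linearization C is given by c(e) = q(e,e) + Σ_{i≠e} (q(i,e) + q(e,i)) − (Σ_{i} Σ_{j≠i} q(i,j))/(n−1). -/
open Finset

/-- `T` (a finite set of edges) is a spanning tree of the simple graph `G`. -/
def IsSpanningTree {V : Type*} (G : SimpleGraph V) (T : Finset (Sym2 V)) : Prop :=
  ↑T ⊆ G.edgeSet ∧ (SimpleGraph.fromEdgeSet (↑T : Set (Sym2 V))).IsTree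

/-- Quadratic cost of a spanning tree: `Q(T) = ∑_{e∈T} ∑_{f∈T} q(e,f)`. -/
noncomputable def treeCost {V : Type*} (Q : Sym2 V → Sym2 V → ℝ) (T : Finset (Sym2 V)) : ℝ :=
  ∑ e ∈ T, ∑ f ∈ T, Q e f

/-- `c` is a linearization of `Q` on `G`. -/
def IsLinearization {V : Type*} (G : SimpleGraph V) (Q : Sym2 V → Sym2 V → ℝ)
    (c : Sym2 V → ℝ) : Prop :=
  ∀ T : Finset (Sym2 V), IsSpanningTree G T → treeCost Q T = ∑ e ∈ T, c e

/-- `Q` is linearizable on `G`. -/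
def Linearizable {V : Type*} (G : SimpleGraph V) (Q : Sym2 V → Sym2 V → ℝ) : Prop :=
  ∃ c : Sym2 V → ℝ, IsLinearization G Q c

/-- Key algebraic identity. -/
lemma key_algebra {α : Type*} [DecidableEq α] (E : Finset α) (Q : α → α → ℝ) (e : α)
    (he : e ∈ E) (d : ℝ)
    (hd : ((E.card : ℝ) - 1) * d = ∑ i ∈ E, ∑ j ∈ E.erase i, Q i j) :
    ∑ f ∈ E.erase e, ∑ g ∈ E.erase e, Q f g
      = ∑ f ∈ E.erase e, (Q f f + ∑ i ∈ E.erase f, (Q i f + Q f i) - d) := by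
  have hD : (∑ i ∈ E, ∑ j ∈ E.erase i, Q i j)
      = (∑ i ∈ E, ∑ j ∈ E, Q i j) - ∑ i ∈ E, Q i i := by
    rw [← Finset.sum_sub_distrib]
    exact Finset.sum_congr rfl fun i hi => Finset.sum_erase_eq_sub hi
  have hLHS : ∑ f ∈ E.erase e, ∑ g ∈ E.erase e, Q f g
      = (∑ i ∈ E, ∑ j ∈ E, Q i j) - (∑ j ∈ E, Q e j) - (∑ i ∈ E, Q i e) + Q e e := by
    rw [Finset.sum_erase_eq_sub (f := fun f => ∑ g ∈ E.erase e, Q f g) he]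
    have : ∀ f ∈ E, ∑ g ∈ E.erase e, Q f g = (∑ g ∈ E, Q f g) - Q f e :=
      fun f _ => Finset.sum_erase_eq_sub he
    rw [Finset.sum_congr rfl this, Finset.sum_sub_distrib, Finset.sum_erase_eq_sub he]
    ring
  have hfun : ∀ f ∈ E, (Q f f + ∑ i ∈ E.erase f, (Q i f + Q f i) - d)
      = (∑ i ∈ E, Q i f) + (∑ i ∈ E, Q f i) - Q f f - d := by
    intro f hf
    rw [Finset.sum_erase_eq_sub (f := fun i => Q i f + Q f i) hf, Finset.sum_add_distrib]
    ring
  have hRHS : ∑ f ∈ E.erase e, (Q f f + ∑ i ∈ E.erase f, (Q i f + Q f i) - d)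
      = (∑ f ∈ E, ((∑ i ∈ E, Q i f) + (∑ i ∈ E, Q f i) - Q f f - d))
        - ((∑ i ∈ E, Q i e) + (∑ i ∈ E, Q e i) - Q e e - d) := by
    rw [Finset.sum_congr rfl fun f hf => hfun f (Finset.mem_of_mem_erase hf),
      Finset.sum_erase_eq_sub (f := fun f => (∑ i ∈ E, Q i f) + (∑ i ∈ E, Q f i) - Q f f - d) he]
  rw [hLHS, hRHS]
  have h1 : ∑ f ∈ E, ((∑ i ∈ E, Q i f) + (∑ i ∈ E, Q f i) - Q f f - d)
      = (∑ i ∈ E, ∑ j ∈ E, Q i j) + (∑ i ∈ E, ∑ j ∈ E, Q i j)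
        - (∑ i ∈ E, Q i i) - (E.card : ℝ) * d := by
    rw [Finset.sum_sub_distrib, Finset.sum_sub_distrib, Finset.sum_add_distrib,
      Finset.sum_comm (f := fun f i => Q i f), Finset.sum_const, nsmul_eq_mul]
  rw [h1]
  rw [hD] at hd
  linarith [hd]

lemma card_edgeFinset_cycleGraph (m : ℕ) :
    (SimpleGraph.cycleGraph (m + 3)).edgeFinset.card = m + 3 := by
  have h := SimpleGraph.sum_degrees_eq_twice_card_edges (SimpleGraph.cycleGraph (m + 3))
  have h2 : ∑ v : Fin (m + 3), (SimpleGraph.cycleGraph (m + 3)).degree v = (m + 3) * 2 := by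
    rw [Finset.sum_congr rfl fun v _ => SimpleGraph.cycleGraph_degree_three_le (v := v)]
    simp [Finset.sum_const, Fintype.card_fin, mul_comm]
  omega

open scoped Classical in
/-- Every cost matrix of the QMSTP on a cycle is linearizable, with the explicit
linearization of Theorem 4. -/
theorem cycle_linearizable (n : ℕ) (hn : 3 ≤ n)
    (Q : Sym2 (Fin n) → Sym2 (Fin n) → ℝ) :
    IsLinearization (SimpleGraph.cycleGraph n) Q
      (fun e =>
        Q e e
          + ∑ i ∈ (SimpleGraph.cycleGraph n).edgeFinset.erase e, (Q i e + Q e i)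
          - (∑ i ∈ (SimpleGraph.cycleGraph n).edgeFinset,
              ∑ j ∈ (SimpleGraph.cycleGraph n).edgeFinset.erase i, Q i j) / ((n : ℝ) - 1)) := by
  intro T hT
  obtain ⟨hsub, htree⟩ := hT
  set G := SimpleGraph.cycleGraph n with hG
  set E := G.edgeFinset with hE
  -- card of E
  obtain ⟨m, rfl⟩ : ∃ m, n = m + 3 := ⟨n - 3, by omega⟩
  have hcardE : E.card = m + 3 := card_edgeFinset_cycleGraph m
  -- edgeFinset of fromEdgeSet T is T
  have hTE : T ⊆ E := fun x hx => SimpleGraph.mem_edgeFinset.mpr (hsub hx)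
  have hTedge : (SimpleGraph.fromEdgeSet (↑T : Set (Sym2 (Fin (m + 3))))).edgeFinset = T := by
    apply Finset.coe_injective
    rw [SimpleGraph.coe_edgeFinset, SimpleGraph.edgeSet_fromEdgeSet]
    ext x
    simp only [Set.mem_diff, Set.mem_setOf_eq, Finset.mem_coe]
    exact ⟨fun h => h.1, fun h => ⟨h, G.not_isDiag_of_mem_edgeSet (hsub h)⟩⟩
  have hcardT : T.card + 1 = m + 3 := by
    have := htree.card_edgeFinset
    rwa [hTedge, Fintype.card_fin] at this
  -- T = E.erase e for some e ∈ E
  have hsd : (E \ T).card = 1 := by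
    rw [Finset.card_sdiff_of_subset hTE]; omega
  obtain ⟨e, he⟩ := Finset.card_eq_one.mp hsd
  have heE : e ∈ E := by
    have : e ∈ E \ T := he ▸ Finset.mem_singleton_self e
    exact (Finset.mem_sdiff.mp this).1
  have hTeq : T = E.erase e := by
    rw [Finset.erase_eq, ← he, Finset.sdiff_sdiff_eq_self hTE]
  subst hTeq
  -- algebra
  have hne : ((m + 3 : ℕ) : ℝ) - 1 ≠ 0 := by
    push_cast; intro h; nlinarith
  apply key_algebra E Q e heE
  rw [hcardE]
  push_cast
  rw [mul_comm, div_mul_cancel₀]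
  intro h; nlinarith
end

section
/- Let M = (m(i,j)) be an n×n matrix with m(i,j) = a_i b_j + c_i d_j, and suppose at least one of the vectors a, b, c, d is constant. Then M is a sum matrix if and only if (a is constant or b is constant) and (c is constant or d is constant). -/
open Finset

/-- A vector is constant. -/
def IsConstVec {n : ℕ} (v : Fin n → ℝ) : Prop := ∀ i j, v i = v j

/-- An `n × n` matrix is a sum matrix. -/
def IsSumMatrix {n : ℕ} (M : Fin n → Fin n → ℝ) : Prop :=
  ∃ e f : Fin n → ℝ, ∀ i j, M i j = e i + f j


lemma prod_is_sum_aux {n : ℕ} (x y e f : Fin n → ℝ)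
    (h : ∀ i j, x i * y j = e i + f j) : IsConstVec x ∨ IsConstVec y := by
  by_cases hx : IsConstVec x
  · exact Or.inl hx
  · right
    unfold IsConstVec at hx
    push_neg at hx
    obtain ⟨i, i', hii⟩ := hx
    intro j j'
    have key : (x i - x i') * (y j - y j') = 0 := by
      linear_combination h i j - h i j' - h i' j + h i' j'
    rcases mul_eq_zero.1 key with h0 | h0
    · exact absurd (sub_eq_zero.1 h0) hii
    · exact sub_eq_zero.1 h0

/-- Rank-two factored matrix with some constant factor: characterization of being
a sum matrix. -/
theorem factored_sum_matrix_const_case (n : ℕ) (M : Fin n → Fin n → ℝ)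
    (a b c d : Fin n → ℝ)
    (hM : ∀ i j, M i j = a i * b j + c i * d j)
    (hconst : IsConstVec a ∨ IsConstVec b ∨ IsConstVec c ∨ IsConstVec d) :
    IsSumMatrix M ↔ ((IsConstVec a ∨ IsConstVec b) ∧ (IsConstVec c ∨ IsConstVec d)) := by
  rcases Nat.eq_zero_or_pos n with hn | hn
  · subst hn
    constructor
    · intro _
      exact ⟨Or.inl (fun i => i.elim0), Or.inl (fun i => i.elim0)⟩
    · intro _
      exact ⟨0, 0, fun i => i.elim0⟩
  · set i0 : Fin n := ⟨0, hn⟩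
    constructor
    · rintro ⟨e, f, hef⟩
      have key : ∀ i j, a i * b j + c i * d j = e i + f j := by
        intro i j; rw [← hM i j]; exact hef i j
      rcases hconst with ha | hb | hc | hd
      · refine ⟨Or.inl ha, ?_⟩
        apply prod_is_sum_aux c d e (fun j => f j - a i0 * b j)
        intro i j
        have := key i j
        rw [ha i i0] at this
        linarith
      · refine ⟨Or.inr hb, ?_⟩
        apply prod_is_sum_aux c d (fun i => e i - a i * b i0) f
        intro i j
        have := key i j
        rw [hb j i0] at this
        linarith
      · refine ⟨?_, Or.inl hc⟩
        apply prod_is_sum_aux a b e (fun j => f j - c i0 * d j)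
        intro i j
        have := key i j
        rw [hc i i0] at this
        linarith
      · refine ⟨?_, Or.inr hd⟩
        apply prod_is_sum_aux a b (fun i => e i - c i * d i0) f
        intro i j
        have := key i j
        rw [hd j i0] at this
        linarith
    · rintro ⟨h1 | h1, h2 | h2⟩
      · exact ⟨fun _ => 0, fun j => a i0 * b j + c i0 * d j,
          fun i j => by rw [hM, h1 i i0, h2 i i0]; ring⟩
      · exact ⟨fun i => c i * d i0, fun j => a i0 * b j,
          fun i j => by rw [hM, h1 i i0, h2 j i0]; try ring⟩
      · exact ⟨fun i => a i * b i0, fun j => c i0 * d j,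
          fun i j => by rw [hM, h1 j i0, h2 i i0]; try ring⟩
      · exact ⟨fun i => a i * b i0 + c i * d i0, fun _ => 0,
          fun i j => by rw [hM, h1 j i0, h2 j i0]; ring⟩
end

section
/- Let M = (m(i,j)) be an n×n matrix with m(i,j) = a_i b_j + c_i d_j, where none of the vectors a, b, c, d is constant. Then M is a sum matrix if and only if there exist constants K ≠ 0, K₁, K₂ such that a_i = K c_i + K₁ and d_i = −K b_i + K₂ for all i = 1,...,n. -/
open Finset

/-- Rank-two factored matrix with no constant factor: characterization of being
a sum matrix. -/
theorem factored_sum_matrix_nonconst_case (n : ℕ) (M : Fin n → Fin n → ℝ)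
    (a b c d : Fin n → ℝ)
    (hM : ∀ i j, M i j = a i * b j + c i * d j)
    (ha : ¬ IsConstVec a) (hb : ¬ IsConstVec b) (hc : ¬ IsConstVec c)
    (hd : ¬ IsConstVec d) :
    IsSumMatrix M ↔
      ∃ K K1 K2 : ℝ, K ≠ 0 ∧ ∀ i, a i = K * c i + K1 ∧ d i = -K * b i + K2 := by
  constructor
  · rintro ⟨e, f, hef⟩
    have key : ∀ i i' j j',
        (a i - a i') * (b j - b j') + (c i - c i') * (d j - d j') = 0 := by
      intro i i' j j'
      have e1 : a i * b j + c i * d j = e i + f j := by rw [← hM]; exact hef i j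
      have e2 : a i * b j' + c i * d j' = e i + f j' := by rw [← hM]; exact hef i j'
      have e3 : a i' * b j + c i' * d j = e i' + f j := by rw [← hM]; exact hef i' j
      have e4 : a i' * b j' + c i' * d j' = e i' + f j' := by rw [← hM]; exact hef i' j'
      linear_combination e1 - e2 - e3 + e4
    simp only [IsConstVec, not_forall] at hb hc
    obtain ⟨j0, j1, hbj⟩ := hb
    obtain ⟨i0, i1, hci⟩ := hc
    have hbne : b j0 - b j1 ≠ 0 := sub_ne_zero.mpr hbj
    have hcne : c i0 - c i1 ≠ 0 := sub_ne_zero.mpr hci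
    obtain ⟨K, hKdef⟩ : ∃ K : ℝ, K = (d j1 - d j0) / (b j0 - b j1) := ⟨_, rfl⟩
    have hK' : ∀ i i', a i - a i' = K * (c i - c i') := by
      intro i i'
      rw [hKdef]
      field_simp
      linear_combination key i i' j0 j1
    have hK0 : K ≠ 0 := by
      intro h0
      apply ha
      intro i i'
      have := hK' i i'
      rw [h0] at this
      linarith
    have hd' : ∀ j j', d j - d j' = -K * (b j - b j') := by
      intro j j'
      have h1 : (c i0 - c i1) * (K * (b j - b j') + (d j - d j')) = 0 := by
        linear_combination key i0 i1 j j' - (b j - b j') * (hK' i0 i1)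
      have h2 := mul_eq_zero.mp h1
      rcases h2 with h2 | h2
      · exact absurd h2 hcne
      · linarith
    refine ⟨K, a j0 - K * c j0, d j0 + K * b j0, hK0, fun i => ⟨?_, ?_⟩⟩
    · have := hK' i j0; linarith
    · have := hd' i j0; linarith
  · rintro ⟨K, K1, K2, hK, h⟩
    refine ⟨fun i => K2 * c i, fun j => K1 * b j, fun i j => ?_⟩
    obtain ⟨h1, _⟩ := h i
    obtain ⟨_, h2⟩ := h j
    rw [hM, h1, h2]; ring
end

section
/- If m(i,j) = a_i b_j + c_i d_j defines a sum matrix and neither b nor d is a constant vector, then for all i, j: a_i = a_j if and only if c_i = c_j. -/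
open Finset

/-- If a factored matrix is a sum matrix and neither `b` nor `d` is constant,
then `a i = a j ↔ c i = c j`. -/
theorem factored_sum_matrix_equal_entries (n : ℕ) (M : Fin n → Fin n → ℝ)
    (a b c d : Fin n → ℝ)
    (hM : ∀ i j, M i j = a i * b j + c i * d j)
    (hsum : IsSumMatrix M)
    (hb : ¬ IsConstVec b) (hd : ¬ IsConstVec d) :
    ∀ i j, a i = a j ↔ c i = c j := by
  obtain ⟨e, f, hef⟩ := hsum
  intro i j
  have key : ∀ k l, (a i - a j) * (b k - b l) + (c i - c j) * (d k - d l) = 0 := by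
    intro k l
    have h1 := hef i k; have h2 := hef j k; have h3 := hef i l; have h4 := hef j l
    rw [hM] at h1 h2 h3 h4
    nlinarith [h1, h2, h3, h4]
  simp only [IsConstVec, not_forall] at hb hd
  obtain ⟨k, l, hkl⟩ := hb
  obtain ⟨k', l', hkl'⟩ := hd
  constructor
  · intro hac
    have := key k' l'
    rw [hac, sub_self, zero_mul, zero_add] at this
    have := mul_eq_zero.mp this
    rcases this with h | h
    · linarith [sub_eq_zero.mp h]
    · exact absurd (sub_eq_zero.mp h) hkl'
  · intro hc
    have := key k l
    rw [hc, sub_self, zero_mul, add_zero] at this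
    rcases mul_eq_zero.mp this with h | h
    · linarith [sub_eq_zero.mp h]
    · exact absurd (sub_eq_zero.mp h) hkl
end

section
/- An instance of the minimum spanning tree problem with edge costs c : E → ℝ on a connected graph G has the property that every spanning tree has the same total cost if and only if all edges belonging to the same biconnected component of G have equal cost. -/
open Finset

/-- Two edges lie on a common cycle of `G`; for distinct edges this means they belong
to the same biconnected component of `G`. -/
def OnCommonCycle {V : Type*} (G : SimpleGraph V) (e f : Sym2 V) : Prop :=
  ∃ (u : V) (w : G.Walk u u), w.IsCycle ∧ e ∈ w.edges ∧ f ∈ w.edges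

open SimpleGraph Walk

section Helpers

variable {V : Type*}

lemma sym2_cases (e : Sym2 V) : ∃ x y, e = s(x, y) :=
  Sym2.ind (fun x y => ⟨x, y, rfl⟩) e

lemma fromEdgeSet_sdiff_singleton (s : Set (Sym2 V)) (g : Sym2 V) :
    SimpleGraph.fromEdgeSet (s \ {g}) = SimpleGraph.fromEdgeSet s \ SimpleGraph.fromEdgeSet {g} := by
  ext x y
  simp only [fromEdgeSet_adj, Set.mem_diff, Set.mem_singleton_iff, sdiff_adj]
  tauto

/-- In a path starting at `x`, an edge incident to `x` must be the first edge. -/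
lemma first_edge {K : SimpleGraph V} {x z : V} {p : K.Walk x z} (hp : p.IsPath) {y : V}
    (he : s(x, y) ∈ p.edges) :
    ∃ (q : K.Walk y z) (h : K.Adj x y), p = Walk.cons h q := by
  cases p with
  | nil => simp at he
  | cons h' p' =>
    rename_i c
    rw [Walk.edges_cons, List.mem_cons] at he
    rcases he with he | he
    · have : y = c := by
        rw [Sym2.eq_iff] at he
        rcases he with ⟨-, rfl⟩ | ⟨h1, h2⟩
        · rfl
        · exact absurd h1 h'.ne
      subst this
      exact ⟨p', h', rfl⟩
    · exfalso
      rw [Walk.cons_isPath_iff] at hp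
      exact hp.2 (Walk.fst_mem_support_of_mem_edges p' he)

/-- From a cycle through the edge `s(x,y)` we extract a path from `x` to `y`
consisting of the remaining edges of the cycle. -/
lemma cycle_path {K : SimpleGraph V} {u : V} {w : K.Walk u u} (hc : w.IsCycle) {x y : V}
    (he : s(x, y) ∈ w.edges) :
    ∃ q : K.Walk x y, q.IsPath ∧ s(x, y) ∉ q.edges ∧
      ∀ g, g ∈ w.edges ↔ g = s(x, y) ∨ g ∈ q.edges := by
  classical
  have hx : x ∈ w.support := w.fst_mem_support_of_mem_edges he
  have hcyc' := hc.rotate hx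
  have hmem : ∀ g, g ∈ (w.rotate x hx).edges ↔ g ∈ w.edges :=
    fun g => (w.rotate_edges x hx).mem_iff
  revert hcyc' hmem
  generalize w.rotate x hx = w'
  intro hcyc' hmem
  cases w' with
  | nil => exact absurd rfl hcyc'.ne_nil
  | cons hadj q =>
    rename_i b
    rw [Walk.cons_isCycle_iff] at hcyc'
    obtain ⟨hq, hbe⟩ := hcyc'
    have he' : s(x, y) ∈ s(x, b) :: q.edges := by
      rw [← Walk.edges_cons hadj q]
      exact (hmem _).mpr he
    by_cases hcase : s(x, y) = s(x, b)
    · have : y = b := by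
        rw [Sym2.eq_iff] at hcase
        rcases hcase with ⟨-, rfl⟩ | ⟨h1, h2⟩
        · rfl
        · exact absurd h1 hadj.ne
      subst this
      refine ⟨q.reverse, hq.reverse, ?_, ?_⟩
      · rw [Walk.edges_reverse, List.mem_reverse]
        exact fun h => hbe (hcase ▸ h)
      · intro g
        rw [← hmem g, Walk.edges_cons, List.mem_cons, Walk.edges_reverse, List.mem_reverse,
          ← hcase]
    · have he'' : s(x, y) ∈ q.edges := by
        rcases List.mem_cons.mp he' with h | h
        · exact absurd h hcase
        · exact h
      have herev : s(x, y) ∈ q.reverse.edges := by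
        rw [Walk.edges_reverse, List.mem_reverse]; exact he''
      obtain ⟨q₂, h₂, hqr⟩ := first_edge hq.reverse herev
      have hq₂path : q₂.IsPath ∧ x ∉ q₂.support := by
        have := hq.reverse
        rw [hqr, Walk.cons_isPath_iff] at this
        exact this
      have hnodup : s(x, y) ∉ q₂.edges := by
        have := hq.reverse.isTrail
        rw [hqr, Walk.isTrail_def, Walk.edges_cons, List.nodup_cons] at this
        exact this.1
      have hqe : q.edges = q₂.edges.reverse ++ [s(x, y)] := by
        have h1 : q.reverse.edges = s(x, y) :: q₂.edges := by rw [hqr, Walk.edges_cons]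
        rw [Walk.edges_reverse] at h1
        have := congrArg List.reverse h1
        rwa [List.reverse_reverse, List.reverse_cons] at this
      refine ⟨Walk.cons hadj q₂.reverse, ?_, ?_, ?_⟩
      · rw [Walk.cons_isPath_iff]
        refine ⟨hq₂path.1.reverse, ?_⟩
        rw [Walk.support_reverse, List.mem_reverse]
        exact hq₂path.2
      · rw [Walk.edges_cons, List.mem_cons]
        rintro (h | h)
        · exact hcase h
        · rw [Walk.edges_reverse, List.mem_reverse] at h
          exact hnodup h
      · intro g
        rw [← hmem g, Walk.edges_cons, List.mem_cons, Walk.edges_cons, List.mem_cons,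
          hqe, List.mem_append, Walk.edges_reverse, List.mem_reverse, List.mem_singleton]
        tauto

/-- If the endpoints of a deleted edge remain reachable, reachability is preserved. -/
lemma reach_repair {K : SimpleGraph V} {p q : V}
    (hpq : (K \ SimpleGraph.fromEdgeSet {s(p, q)}).Reachable p q) :
    ∀ {x y : V}, K.Reachable x y → (K \ SimpleGraph.fromEdgeSet {s(p, q)}).Reachable x y := by
  intro x y hxy
  obtain ⟨P⟩ := hxy
  induction P with
  | nil => exact Reachable.refl _
  | cons h' P' ih =>
    rename_i a b c
    refine Reachable.trans ?_ ih
    by_cases hg : s(a, b) = s(p, q)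
    · rw [Sym2.eq_iff] at hg
      rcases hg with ⟨rfl, rfl⟩ | ⟨rfl, rfl⟩
      · exact hpq
      · exact hpq.symm
    · refine Adj.reachable ?_
      rw [sdiff_adj]
      refine ⟨h', ?_⟩
      rw [fromEdgeSet_adj]
      rintro ⟨hmem, -⟩
      exact hg (Set.mem_singleton_iff.mp hmem)

/-- Deleting an edge lying on a cycle preserves connectivity. -/
lemma conn_delete_of_cycle {K : SimpleGraph V} (hK : K.Connected) {u : V} {w : K.Walk u u}
    (hw : w.IsCycle) {f : Sym2 V} (hf : f ∈ w.edges) :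
    (K \ SimpleGraph.fromEdgeSet {f}).Connected := by
  obtain ⟨p, q, rfl⟩ := sym2_cases f
  have hr : (K \ SimpleGraph.fromEdgeSet {s(p, q)}).Reachable p q :=
    ((adj_and_reachable_delete_edges_iff_exists_cycle).mpr ⟨u, w, hw, hf⟩).2
  haveI := hK.nonempty
  exact ⟨fun x y => reach_repair hr (hK.preconnected x y)⟩

lemma eq_of_reachable_isolated {K : SimpleGraph V} {a d : V}
    (hiso : ∀ z, ¬K.Adj a z) (h : K.Reachable a d) : a = d := by
  obtain ⟨P⟩ := h
  cases P with
  | nil => rfl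
  | cons h' P' => exact absurd h' (hiso _)

/-- The graph on the edges of a path is acyclic. -/
lemma path_edges_acyclic {G : SimpleGraph V} {a b : V} {p : G.Walk a b} (hp : p.IsPath) :
    (SimpleGraph.fromEdgeSet {g | g ∈ p.edges}).IsAcyclic := by
  induction p with
  | nil => simpa using (isAcyclic_bot (V := V))
  | cons h' p' ih =>
    rename_i a' d' b'
    rw [Walk.cons_isPath_iff] at hp
    have ih' := ih hp.1
    have hset : {g | g ∈ (Walk.cons h' p').edges} = insert s(a', d') {g | g ∈ p'.edges} := by
      ext g; simp [Walk.edges_cons]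
    rw [hset]
    intro u₀ w₀ hcyc
    by_cases hg : s(a', d') ∈ w₀.edges
    · have hreach := ((adj_and_reachable_delete_edges_iff_exists_cycle).mpr
        ⟨u₀, w₀, hcyc, hg⟩).2
      have hle : (SimpleGraph.fromEdgeSet (insert s(a', d') {g | g ∈ p'.edges}) \
          SimpleGraph.fromEdgeSet {s(a', d')}) ≤ SimpleGraph.fromEdgeSet {g | g ∈ p'.edges} := by
        intro x y hxy
        rw [sdiff_adj, fromEdgeSet_adj, fromEdgeSet_adj] at hxy
        rcases hxy with ⟨⟨hmem, hne⟩, hnot⟩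
        rcases hmem with hmem | hmem
        · exact absurd ⟨Set.mem_singleton_iff.mpr hmem, hne⟩ hnot
        · exact (fromEdgeSet_adj _).mpr ⟨hmem, hne⟩
      have hreach' := hreach.mono hle
      have hiso : ∀ z, ¬(SimpleGraph.fromEdgeSet {g | g ∈ p'.edges}).Adj a' z := by
        intro z hz
        rw [fromEdgeSet_adj _] at hz
        exact hp.2 (Walk.fst_mem_support_of_mem_edges p' hz.1)
      exact h'.ne (eq_of_reachable_isolated hiso hreach')
    · have hgd : s(a', d') ∉ {g | g ∈ p'.edges} := fun hmem =>
        hp.2 (Walk.fst_mem_support_of_mem_edges p' hmem)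
      have htr : ∀ g ∈ w₀.edges, g ∈ (SimpleGraph.fromEdgeSet {g | g ∈ p'.edges}).edgeSet := by
        intro g hgw
        have hge := w₀.edges_subset_edgeSet hgw
        rw [edgeSet_fromEdgeSet] at hge ⊢
        rcases hge with ⟨hmem, hnd⟩
        rcases hmem with rfl | hmem
        · exact absurd hgw hg
        · exact ⟨hmem, hnd⟩
      exact ih' (w₀.transfer _ htr) (hcyc.transfer htr)

lemma sdiff_insert_le (s : Set (Sym2 V)) (g : Sym2 V) :
    SimpleGraph.fromEdgeSet (insert g s) \ SimpleGraph.fromEdgeSet {g} ≤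
      SimpleGraph.fromEdgeSet s := by
  intro x y hxy
  rw [sdiff_adj, fromEdgeSet_adj, fromEdgeSet_adj] at hxy
  rcases hxy with ⟨⟨hmem, hne⟩, hnot⟩
  rcases hmem with rfl | hmem
  · exact absurd ⟨Set.mem_singleton_iff.mpr rfl, hne⟩ hnot
  · exact (fromEdgeSet_adj _).mpr ⟨hmem, hne⟩

lemma no_new_cycle {s : Set (Sym2 V)} {g : Sym2 V} {u : V}
    (hac : (SimpleGraph.fromEdgeSet s).IsAcyclic)
    (w : (SimpleGraph.fromEdgeSet (insert g s)).Walk u u) (hcyc : w.IsCycle)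
    (hg : g ∉ w.edges) : False := by
  have htr : ∀ e ∈ w.edges, e ∈ (SimpleGraph.fromEdgeSet s).edgeSet := by
    intro e hew
    have he := w.edges_subset_edgeSet hew
    rw [edgeSet_fromEdgeSet] at he ⊢
    rcases he with ⟨hmem, hnd⟩
    rcases hmem with rfl | hmem
    · exact absurd hew hg
    · exact ⟨hmem, hnd⟩
  exact hac (w.transfer _ htr) (hcyc.transfer htr)

lemma frontierEdge {G K : SimpleGraph V} {x : V} :
    ∀ {u y : V} (_ : G.Walk u y), K.Reachable x u → ¬K.Reachable x y →
      ∃ a b, G.Adj a b ∧ K.Reachable x a ∧ ¬K.Reachable x b := by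
  intro u y p
  induction p with
  | nil => exact fun h1 h2 => absurd h1 h2
  | cons h' p' ih =>
    intro h1 h2
    rename_i a b c
    by_cases hb : K.Reachable x b
    · exact ih hb h2
    · exact ⟨a, b, h', h1, hb⟩


lemma extend_step {G : SimpleGraph V} (hconn : G.Connected) {F : Finset (Sym2 V)}
    (hsub : ↑F ⊆ G.edgeSet) (hac : (SimpleGraph.fromEdgeSet (↑F : Set (Sym2 V))).IsAcyclic)
    (hnc : ¬(SimpleGraph.fromEdgeSet (↑F : Set (Sym2 V))).Connected) :
    ∃ g, g ∈ G.edgeSet ∧ g ∉ F ∧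
      (SimpleGraph.fromEdgeSet (insert g (↑F : Set (Sym2 V)))).IsAcyclic := by
  classical
  haveI := hconn.nonempty
  have hpre : ¬(SimpleGraph.fromEdgeSet (↑F : Set (Sym2 V))).Preconnected :=
    fun h => hnc ⟨h⟩
  rw [SimpleGraph.Preconnected] at hpre
  push_neg at hpre
  obtain ⟨x, y, hxy⟩ := hpre
  obtain ⟨P⟩ := hconn.preconnected x y
  obtain ⟨a, b, hadj, hra, hrb⟩ := frontierEdge P (Reachable.refl x) hxy
  refine ⟨s(a, b), hadj, ?_, ?_⟩
  · intro hmem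
    exact hrb (hra.trans (Adj.reachable ((fromEdgeSet_adj _).mpr ⟨hmem, hadj.ne⟩)))
  · intro u₀ w₀ hcyc
    by_cases hg : s(a, b) ∈ w₀.edges
    · have hreach := ((adj_and_reachable_delete_edges_iff_exists_cycle).mpr
        ⟨u₀, w₀, hcyc, hg⟩).2
      exact hrb (hra.trans (hreach.mono (sdiff_insert_le _ _)))
    · exact no_new_cycle hac w₀ hcyc hg

lemma exists_spanning_tree_ext [Fintype V] [DecidableEq V] {G : SimpleGraph V}
    (hconn : G.Connected) :
    ∀ (n : ℕ) (F : Finset (Sym2 V)), Fintype.card (Sym2 V) - F.card ≤ n →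
      ↑F ⊆ G.edgeSet → (SimpleGraph.fromEdgeSet (↑F : Set (Sym2 V))).IsAcyclic →
      ∃ T : Finset (Sym2 V), IsSpanningTree G T ∧ F ⊆ T := by
  intro n
  induction n with
  | zero =>
    intro F hn hsub hac
    by_cases hc : (SimpleGraph.fromEdgeSet (↑F : Set (Sym2 V))).Connected
    · exact ⟨F, ⟨hsub, hc, hac⟩, Finset.Subset.refl F⟩
    · obtain ⟨g, -, hgF, -⟩ := extend_step hconn hsub hac hc
      have h1 : F ⊂ Finset.univ := Finset.ssubset_univ_iff.mpr (fun h => hgF (h ▸ Finset.mem_univ g))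
      have h2 := Finset.card_lt_card h1
      rw [Finset.card_univ] at h2
      omega
  | succ n ih =>
    intro F hn hsub hac
    by_cases hc : (SimpleGraph.fromEdgeSet (↑F : Set (Sym2 V))).Connected
    · exact ⟨F, ⟨hsub, hc, hac⟩, Finset.Subset.refl F⟩
    · obtain ⟨g, hge, hgF, hac'⟩ := extend_step hconn hsub hac hc
      have hcard : F.card < Fintype.card (Sym2 V) := by
        have h1 : F ⊂ Finset.univ :=
          Finset.ssubset_univ_iff.mpr (fun h => hgF (h ▸ Finset.mem_univ g))
        have h2 := Finset.card_lt_card h1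
        rwa [Finset.card_univ] at h2
      obtain ⟨T, hT, hFT⟩ := ih (insert g F) (by
          rw [Finset.card_insert_of_notMem hgF]; omega)
        (by rw [Finset.coe_insert]; exact Set.insert_subset hge hsub)
        (by rw [Finset.coe_insert]; exact hac')
      exact ⟨T, hT, (Finset.subset_insert g F).trans hFT⟩

lemma edge_of_H {s : Set (Sym2 V)} {g : Sym2 V}
    (h : g ∈ (SimpleGraph.fromEdgeSet s).edgeSet) : g ∈ s ∧ ¬g.IsDiag := by
  rwa [edgeSet_fromEdgeSet] at h

lemma swap_spanning_tree [DecidableEq V] {G : SimpleGraph V} {T : Finset (Sym2 V)}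
    (hT : IsSpanningTree G T) {e f : Sym2 V} (he : e ∈ G.edgeSet) (heT : e ∉ T)
    (hfT : f ∈ T) {u : V}
    {w : (SimpleGraph.fromEdgeSet (insert e (↑T : Set (Sym2 V)))).Walk u u} (hw : w.IsCycle)
    (hew : e ∈ w.edges) (hfw : f ∈ w.edges) :
    IsSpanningTree G (insert e (T.erase f)) := by
  obtain ⟨hTsub, hTtree⟩ := hT
  have hfe : f ≠ e := fun h => heT (h ▸ hfT)
  have hHle : SimpleGraph.fromEdgeSet (↑T : Set (Sym2 V)) ≤
      SimpleGraph.fromEdgeSet (insert e (↑T : Set (Sym2 V))) :=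
    fromEdgeSet_mono (Set.subset_insert e _)
  have hcoe : (↑(insert e (T.erase f)) : Set (Sym2 V)) =
      insert e (↑T : Set (Sym2 V)) \ {f} := by
    rw [Finset.coe_insert, Finset.coe_erase]
    exact Set.insert_diff_singleton_comm (fun h => hfe h.symm) _
  have hgraph : SimpleGraph.fromEdgeSet (↑(insert e (T.erase f)) : Set (Sym2 V)) =
      SimpleGraph.fromEdgeSet (insert e (↑T : Set (Sym2 V))) \
        SimpleGraph.fromEdgeSet {f} := by
    rw [hcoe, fromEdgeSet_sdiff_singleton]
  constructor
  · rw [Finset.coe_insert]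
    exact Set.insert_subset he
      (fun g hg => hTsub (Finset.mem_coe.mpr (Finset.mem_of_mem_erase hg)))
  · rw [hgraph]
    have hHconn : (SimpleGraph.fromEdgeSet (insert e (↑T : Set (Sym2 V)))).Connected :=
      hTtree.isConnected.mono hHle
    refine ⟨conn_delete_of_cycle hHconn hw hfw, ?_⟩
    intro u₀ w₀ hcyc₀
    obtain ⟨x, y, rfl⟩ := sym2_cases e
    by_cases hew₀ : s(x, y) ∈ w₀.edges
    · obtain ⟨q₀, hq₀p, hq₀e, -⟩ := cycle_path hcyc₀ hew₀
      obtain ⟨q, hqp, hqe, hqmem⟩ := cycle_path hw hew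
      have hfq : f ∈ q.edges := ((hqmem f).mp hfw).resolve_left hfe
      have htr_q : ∀ g ∈ q.edges, g ∈ (SimpleGraph.fromEdgeSet (↑T : Set (Sym2 V))).edgeSet := by
        intro g hg
        obtain ⟨hmem, hnd⟩ := edge_of_H (q.edges_subset_edgeSet hg)
        rw [edgeSet_fromEdgeSet]
        rcases hmem with rfl | hmem
        · exact absurd hg hqe
        · exact ⟨hmem, hnd⟩
      have htr_q₀ : ∀ g ∈ q₀.edges,
          g ∈ (SimpleGraph.fromEdgeSet (↑T : Set (Sym2 V))).edgeSet ∧ g ≠ f := by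
        intro g hg
        have hgH := q₀.edges_subset_edgeSet hg
        rw [edgeSet_sdiff, Set.mem_diff, edgeSet_fromEdgeSet, edgeSet_fromEdgeSet] at hgH
        obtain ⟨⟨hmem, hnd⟩, hnot⟩ := hgH
        have hgf : g ≠ f := fun h => hnot ⟨Set.mem_singleton_iff.mpr h, hnd⟩
        rw [edgeSet_fromEdgeSet]
        rcases hmem with rfl | hmem
        · exact absurd hg hq₀e
        · exact ⟨⟨hmem, hnd⟩, hgf⟩
      have hp₂ := hqp.transfer htr_q
      have hp₁ := hq₀p.transfer (fun g hg => (htr_q₀ g hg).1)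
      have hpeq := hTtree.IsAcyclic.path_unique
        ⟨q₀.transfer _ (fun g hg => (htr_q₀ g hg).1), hp₁⟩ ⟨q.transfer _ htr_q, hp₂⟩
      have hedges : (q₀.transfer _ (fun g hg => (htr_q₀ g hg).1)).edges =
          (q.transfer _ htr_q).edges := congrArg (fun p => SimpleGraph.Walk.edges p.val) hpeq
      rw [q₀.edges_transfer, q.edges_transfer] at hedges
      have : f ∈ q₀.edges := hedges ▸ hfq
      exact (htr_q₀ f this).2 rfl
    · have htr : ∀ g ∈ w₀.edges,
          g ∈ (SimpleGraph.fromEdgeSet (↑T : Set (Sym2 V))).edgeSet := by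
        intro g hg
        have hgH := w₀.edges_subset_edgeSet hg
        rw [edgeSet_sdiff, Set.mem_diff, edgeSet_fromEdgeSet, edgeSet_fromEdgeSet] at hgH
        obtain ⟨⟨hmem, hnd⟩, -⟩ := hgH
        rw [edgeSet_fromEdgeSet]
        rcases hmem with rfl | hmem
        · exact absurd hg hew₀
        · exact ⟨hmem, hnd⟩
      exact hTtree.IsAcyclic (w₀.transfer _ htr) (hcyc₀.transfer htr)


lemma st_subset_eq {G : SimpleGraph V} {T₁ T₂ : Finset (Sym2 V)}
    (h1 : IsSpanningTree G T₁) (h2 : IsSpanningTree G T₂) (hsub : T₁ ⊆ T₂) : T₁ = T₂ := by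
  refine Finset.Subset.antisymm hsub ?_
  intro f hf
  by_contra hfT₁
  obtain ⟨p, q, rfl⟩ := sym2_cases f
  have hpq : p ≠ q := fun h =>
    G.not_isDiag_of_mem_edgeSet (h2.1 hf) (Sym2.mk_isDiag_iff.mpr h)
  have hadj : (SimpleGraph.fromEdgeSet (↑T₂ : Set (Sym2 V))).Adj p q :=
    (fromEdgeSet_adj _).mpr ⟨hf, hpq⟩
  have hle : SimpleGraph.fromEdgeSet (↑T₁ : Set (Sym2 V)) ≤
      SimpleGraph.fromEdgeSet (↑T₂ : Set (Sym2 V)) \ SimpleGraph.fromEdgeSet {s(p, q)} := by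
    intro a b hab
    rw [fromEdgeSet_adj] at hab
    rw [sdiff_adj, fromEdgeSet_adj, fromEdgeSet_adj]
    refine ⟨⟨hsub hab.1, hab.2⟩, ?_⟩
    rintro ⟨hm, -⟩
    exact hfT₁ (Set.mem_singleton_iff.mp hm ▸ hab.1)
  have hreach := (h1.2.isConnected.preconnected p q).mono hle
  obtain ⟨u₁, w₁, hw₁, -⟩ :=
    (adj_and_reachable_delete_edges_iff_exists_cycle).mp ⟨hadj, hreach⟩
  exact h2.2.IsAcyclic w₁ hw₁


end Helpers

/-- All spanning trees of a connected graph have the same cost iff the edge costs are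
constant on every biconnected component (equivalently, any two edges lying on a common
cycle have equal cost). -/
theorem constant_mst_iff_bicomp_constant {V : Type*} [Fintype V] (G : SimpleGraph V)
    (hconn : G.Connected) (c : Sym2 V → ℝ) :
    (∀ T₁ T₂ : Finset (Sym2 V), IsSpanningTree G T₁ → IsSpanningTree G T₂ →
        ∑ e ∈ T₁, c e = ∑ e ∈ T₂, c e) ↔
      (∀ e f : Sym2 V, OnCommonCycle G e f → c e = c f) := by
  classical
  constructor
  · intro hst e f hcc
    by_cases hef : e = f
    · rw [hef]
    obtain ⟨u, w, hw, hewG, hfwG⟩ := hcc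
    obtain ⟨x, y, rfl⟩ := sym2_cases e
    have hxyG : s(x, y) ∈ G.edgeSet := w.edges_subset_edgeSet hewG
    have hxy : x ≠ y := ((SimpleGraph.mem_edgeSet G).mp hxyG).ne
    have htrC : ∀ g ∈ w.edges,
        g ∈ (SimpleGraph.fromEdgeSet (↑w.edges.toFinset : Set (Sym2 V))).edgeSet := by
      intro g hg
      rw [edgeSet_fromEdgeSet]
      exact ⟨by simpa using hg, G.not_isDiag_of_mem_edgeSet (w.edges_subset_edgeSet hg)⟩
    have hwC : (w.transfer _ htrC).IsCycle := hw.transfer htrC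
    have heC : s(x, y) ∈ (w.transfer _ htrC).edges := by
      rw [w.edges_transfer]; exact hewG
    obtain ⟨q, hqp, hqe, hqmem⟩ := cycle_path hwC heC
    have hfq : f ∈ q.edges := by
      have hfC : f ∈ (w.transfer _ htrC).edges := by rw [w.edges_transfer]; exact hfwG
      exact ((hqmem f).mp hfC).resolve_left (fun h => hef h.symm)
    have hFac : (SimpleGraph.fromEdgeSet (↑q.edges.toFinset : Set (Sym2 V))).IsAcyclic := by
      rw [show (↑q.edges.toFinset : Set (Sym2 V)) = {g | g ∈ q.edges} from by
        ext g; simp]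
      exact path_edges_acyclic hqp
    have hFsub : (↑q.edges.toFinset : Set (Sym2 V)) ⊆ G.edgeSet := by
      intro g hg
      rw [Finset.mem_coe, List.mem_toFinset] at hg
      have := edge_of_H (q.edges_subset_edgeSet hg)
      rw [Finset.mem_coe, List.mem_toFinset] at this
      exact w.edges_subset_edgeSet this.1
    obtain ⟨T, hT, hFT⟩ := exists_spanning_tree_ext hconn (Fintype.card (Sym2 V))
      q.edges.toFinset (Nat.sub_le _ _) hFsub hFac
    have hfT : f ∈ T := hFT (List.mem_toFinset.mpr hfq)
    have heT : s(x, y) ∉ T := by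
      intro heT
      have hadjT : (SimpleGraph.fromEdgeSet (↑T : Set (Sym2 V))).Adj x y :=
        (fromEdgeSet_adj _).mpr ⟨heT, hxy⟩
      have htrq : ∀ g ∈ q.edges,
          g ∈ (SimpleGraph.fromEdgeSet (↑T : Set (Sym2 V)) \
            SimpleGraph.fromEdgeSet {s(x, y)}).edgeSet := by
        intro g hg
        rw [edgeSet_sdiff, Set.mem_diff, edgeSet_fromEdgeSet, edgeSet_fromEdgeSet]
        have hnd := (edge_of_H (q.edges_subset_edgeSet hg)).2
        refine ⟨⟨hFT (List.mem_toFinset.mpr hg), hnd⟩, ?_⟩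
        rintro ⟨hm, -⟩
        exact hqe (Set.mem_singleton_iff.mp hm ▸ hg)
      have hreach : (SimpleGraph.fromEdgeSet (↑T : Set (Sym2 V)) \
          SimpleGraph.fromEdgeSet {s(x, y)}).Reachable x y := ⟨q.transfer _ htrq⟩
      obtain ⟨u₁, w₁, hw₁, -⟩ :=
        (adj_and_reachable_delete_edges_iff_exists_cycle).mp ⟨hadjT, hreach⟩
      exact hT.2.IsAcyclic w₁ hw₁
    have htrH : ∀ g ∈ q.edges,
        g ∈ (SimpleGraph.fromEdgeSet (insert s(x, y) (↑T : Set (Sym2 V)))).edgeSet := by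
      intro g hg
      rw [edgeSet_fromEdgeSet]
      exact ⟨Set.mem_insert_of_mem _ (hFT (List.mem_toFinset.mpr hg)),
        (edge_of_H (q.edges_subset_edgeSet hg)).2⟩
    have hadjH : (SimpleGraph.fromEdgeSet (insert s(x, y) (↑T : Set (Sym2 V)))).Adj y x :=
      (fromEdgeSet_adj _).mpr ⟨by rw [Sym2.eq_swap]; exact Set.mem_insert _ _, hxy.symm⟩
    have hwcyc : (Walk.cons hadjH (q.transfer _ htrH)).IsCycle := by
      rw [Walk.cons_isCycle_iff]
      refine ⟨hqp.transfer htrH, ?_⟩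
      rw [q.edges_transfer htrH, Sym2.eq_swap]
      exact hqe
    have hecyc : s(x, y) ∈ (Walk.cons hadjH (q.transfer _ htrH)).edges := by
      rw [Walk.edges_cons, List.mem_cons]
      exact Or.inl Sym2.eq_swap
    have hfcyc : f ∈ (Walk.cons hadjH (q.transfer _ htrH)).edges := by
      rw [Walk.edges_cons, List.mem_cons, q.edges_transfer htrH]
      exact Or.inr hfq
    have hT' := swap_spanning_tree hT hxyG heT hfT hwcyc hecyc hfcyc
    have hsum := hst T (insert s(x, y) (T.erase f)) hT hT'
    rw [Finset.sum_insert (fun h => heT (Finset.mem_of_mem_erase h))] at hsum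
    have hsum2 := Finset.add_sum_erase T c hfT
    linarith
  · intro hcc
    have key : ∀ n (T₁ T₂ : Finset (Sym2 V)), IsSpanningTree G T₁ → IsSpanningTree G T₂ →
        (T₁ \ T₂).card ≤ n → ∑ e ∈ T₁, c e = ∑ e ∈ T₂, c e := by
      intro n
      induction n with
      | zero =>
        intro T₁ T₂ hT₁ hT₂ hcard
        have : T₁ \ T₂ = ∅ := Finset.card_eq_zero.mp (Nat.le_zero.mp hcard)
        rw [st_subset_eq hT₁ hT₂ (Finset.sdiff_eq_empty_iff_subset.mp this)]
      | succ n ih =>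
        intro T₁ T₂ hT₁ hT₂ hcard
        by_cases hempty : T₁ \ T₂ = ∅
        · rw [st_subset_eq hT₁ hT₂ (Finset.sdiff_eq_empty_iff_subset.mp hempty)]
        obtain ⟨e, he⟩ := Finset.nonempty_of_ne_empty hempty
        rw [Finset.mem_sdiff] at he
        obtain ⟨heT₁, heT₂⟩ := he
        have he_edge : e ∈ G.edgeSet := hT₁.1 heT₁
        obtain ⟨x, y, rfl⟩ := sym2_cases e
        have hxy : x ≠ y := ((SimpleGraph.mem_edgeSet G).mp he_edge).ne
        have hadjH : (SimpleGraph.fromEdgeSet (insert s(x, y) (↑T₂ : Set (Sym2 V)))).Adj x y :=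
          (fromEdgeSet_adj _).mpr ⟨Set.mem_insert _ _, hxy⟩
        have hle : SimpleGraph.fromEdgeSet (↑T₂ : Set (Sym2 V)) ≤
            SimpleGraph.fromEdgeSet (insert s(x, y) (↑T₂ : Set (Sym2 V))) \
              SimpleGraph.fromEdgeSet {s(x, y)} := by
          intro a b hab
          rw [fromEdgeSet_adj] at hab
          rw [sdiff_adj, fromEdgeSet_adj, fromEdgeSet_adj]
          refine ⟨⟨Set.mem_insert_of_mem _ hab.1, hab.2⟩, ?_⟩
          rintro ⟨hm, -⟩
          exact heT₂ (Set.mem_singleton_iff.mp hm ▸ hab.1)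
        have hreach := (hT₂.2.isConnected.preconnected x y).mono hle
        obtain ⟨u, w, hw, hew⟩ :=
          (adj_and_reachable_delete_edges_iff_exists_cycle).mp ⟨hadjH, hreach⟩
        have hex : ∃ f ∈ w.edges, f ∉ T₁ := by
          by_contra hall
          push_neg at hall
          have htr : ∀ g ∈ w.edges,
              g ∈ (SimpleGraph.fromEdgeSet (↑T₁ : Set (Sym2 V))).edgeSet := by
            intro g hg
            rw [edgeSet_fromEdgeSet]
            exact ⟨hall g hg, (edge_of_H (w.edges_subset_edgeSet hg)).2⟩
          exact hT₁.2.IsAcyclic (w.transfer _ htr) (hw.transfer htr)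
        obtain ⟨f, hfw, hfT₁⟩ := hex
        have hfe : f ≠ s(x, y) := fun h => hfT₁ (h ▸ heT₁)
        have hfT₂ : f ∈ T₂ := by
          have := (edge_of_H (w.edges_subset_edgeSet hfw)).1
          rcases this with h | h
          · exact absurd h hfe
          · exact h
        have htrG : ∀ g ∈ w.edges, g ∈ G.edgeSet := by
          intro g hg
          have := (edge_of_H (w.edges_subset_edgeSet hg)).1
          rcases this with rfl | h
          · exact he_edge
          · exact hT₂.1 h
        have hcef : c s(x, y) = c f := hcc _ _ ⟨u, w.transfer G htrG, hw.transfer htrG,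
          by rw [w.edges_transfer]; exact hew, by rw [w.edges_transfer]; exact hfw⟩
        have hT₂' := swap_spanning_tree hT₂ he_edge heT₂ hfT₂ hw hew hfw
        have hdiff : T₁ \ insert s(x, y) (T₂.erase f) = (T₁ \ T₂).erase s(x, y) := by
          ext g
          simp only [Finset.mem_sdiff, Finset.mem_insert, Finset.mem_erase, not_or]
          constructor
          · rintro ⟨h1, h2, h3⟩
            refine ⟨h2, h1, fun hgT₂ => ?_⟩
            by_cases hgf : g = f
            · exact hfT₁ (hgf ▸ h1)
            · exact h3 ⟨hgf, hgT₂⟩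
          · rintro ⟨h2, h1, h3⟩
            exact ⟨h1, h2, fun hm => h3 hm.2⟩
        have hmemdiff : s(x, y) ∈ T₁ \ T₂ := Finset.mem_sdiff.mpr ⟨heT₁, heT₂⟩
        have hcard' : (T₁ \ insert s(x, y) (T₂.erase f)).card ≤ n := by
          rw [hdiff, Finset.card_erase_of_mem hmemdiff]
          have hpos : 0 < (T₁ \ T₂).card := Finset.card_pos.mpr ⟨s(x, y), hmemdiff⟩
          omega
        have hstep := ih T₁ (insert s(x, y) (T₂.erase f)) hT₁ hT₂' hcard'
        rw [hstep, Finset.sum_insert (fun h => heT₂ (Finset.mem_of_mem_erase h))]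
        have hsum2 := Finset.add_sum_erase T₂ c hfT₂
        linarith
    exact fun T₁ T₂ h1 h2 => key (T₁ \ T₂).card T₁ T₂ h1 h2 le_rfl
end

section
/- The multiplicative minimum spanning tree problem is NP-hard even when all edge weights d¹_e, d²_e are nonnegative: deciding whether a graph G with nonnegative edge weights d¹, d² and constants δ₁, δ₂ admits a spanning tree T with (Σ_{e∈T} d¹_e + δ₁)(Σ_{e∈T} d²_e + δ₂) ≤ 0 is NP-hard, via reduction from the subset sum problem. -/
open Finset

lemma walk_support_eq_map {V : Type*} {G : SimpleGraph V} {u v : V} (p : G.Walk u v) :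
    p.support = (List.range (p.length + 1)).map p.getVert := by
  induction p with
  | nil => simp [SimpleGraph.Walk.getVert]
  | cons h q ih =>
    rw [SimpleGraph.Walk.support_cons, SimpleGraph.Walk.length_cons,
      List.range_succ_eq_map, List.map_cons, List.map_map]
    rw [ih]
    simp [Function.comp_def, SimpleGraph.Walk.getVert_cons_succ]

lemma walk_support_tail_eq_map {V : Type*} {G : SimpleGraph V} {u v : V} (p : G.Walk u v) :
    p.support.tail = (List.range p.length).map (fun k => p.getVert (k + 1)) := by
  rw [walk_support_eq_map, List.range_succ_eq_map, List.map_cons, List.map_map, List.tail_cons]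
  rfl

lemma isTree_of_parent {V : Type*} [Nonempty V] (r : V) (p : V → V) (f : V → ℕ)
    (hp : ∀ v, v ≠ r → f (p v) < f v) :
    (SimpleGraph.fromEdgeSet {e : Sym2 V | ∃ v, v ≠ r ∧ e = s(v, p v)}).IsTree := by
  classical
  set G := SimpleGraph.fromEdgeSet {e : Sym2 V | ∃ v, v ≠ r ∧ e = s(v, p v)} with hG
  have hadj : ∀ x y, G.Adj x y → (x ≠ r ∧ y = p x) ∨ (y ≠ r ∧ x = p y) := by
    intro x y hxy
    rw [hG, SimpleGraph.fromEdgeSet_adj] at hxy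
    obtain ⟨⟨w, hwr, hw⟩, _⟩ := hxy
    rw [Sym2.eq_iff] at hw
    rcases hw with ⟨rfl, rfl⟩ | ⟨rfl, rfl⟩
    · exact Or.inl ⟨hwr, rfl⟩
    · exact Or.inr ⟨hwr, rfl⟩
  have hpadj : ∀ v, v ≠ r → G.Adj v (p v) := by
    intro v hv
    rw [hG, SimpleGraph.fromEdgeSet_adj]
    refine ⟨⟨v, hv, rfl⟩, fun h => ?_⟩
    have := hp v hv
    rw [← h] at this
    omega
  have key : ∀ N, ∀ v : V, f v < N → G.Reachable v r := by
    intro N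
    induction N with
    | zero => intro v h; omega
    | succ N ih =>
      intro v hv
      by_cases hvr : v = r
      · subst hvr; rfl
      · exact ((hpadj v hvr).reachable).trans (ih (p v) (by have := hp v hvr; omega))
  constructor
  · exact SimpleGraph.Connected.mk
      fun u v => (key (f u + 1) u (by omega)).trans (key (f v + 1) v (by omega)).symm
  · intro v c hc
    -- pick index of maximal rank
    obtain ⟨i, hi, hmax⟩ := Finset.exists_max_image (Finset.range (c.length + 1))
      (fun j => f (c.getVert j)) ⟨0, by simp⟩
    have hiL : i ≤ c.length := by simpa using Nat.lt_succ_iff.mp (Finset.mem_range.mp hi)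
    have hu : c.getVert i ∈ c.support :=
      SimpleGraph.Walk.mem_support_iff_exists_getVert.mpr ⟨i, rfl, hiL⟩
    set u := c.getVert i with hudef
    have hmaxs : ∀ w ∈ c.support, f w ≤ f u := by
      intro w hw
      obtain ⟨j, hj, hjL⟩ := SimpleGraph.Walk.mem_support_iff_exists_getVert.mp hw
      rw [← hj]
      exact hmax j (Finset.mem_range.mpr (Nat.lt_succ_of_le hjL))
    have hc' := hc.rotate hu
    set c' := c.rotate u hu with hc'def
    have hmax' : ∀ w ∈ c'.support, f w ≤ f u := by
      intro w hw
      rw [SimpleGraph.Walk.support_eq_cons] at hw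
      rcases List.mem_cons.mp hw with rfl | hw
      · exact le_refl _
      · exact hmaxs w (List.mem_of_mem_tail
          ((SimpleGraph.Walk.support_rotate c u hu).mem_iff.mp hw))
    have hL : 3 ≤ c'.length := hc'.three_le_length
    have hx : G.Adj u (c'.getVert 1) := by
      have := c'.adj_getVert_succ (i := 0) (by omega)
      rwa [SimpleGraph.Walk.getVert_zero] at this
    have hy : G.Adj (c'.getVert (c'.length - 1)) u := by
      have := c'.adj_getVert_succ (i := c'.length - 1) (by omega)
      rwa [show c'.length - 1 + 1 = c'.length by omega,
        SimpleGraph.Walk.getVert_length] at this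
    have hxs : c'.getVert 1 ∈ c'.support :=
      SimpleGraph.Walk.mem_support_iff_exists_getVert.mpr ⟨1, rfl, by omega⟩
    have hys : c'.getVert (c'.length - 1) ∈ c'.support :=
      SimpleGraph.Walk.mem_support_iff_exists_getVert.mpr ⟨c'.length - 1, rfl, by omega⟩
    have hx' : c'.getVert 1 = p u := by
      rcases hadj _ _ hx with ⟨_, h⟩ | ⟨h1, h2⟩
      · exact h
      · exfalso
        have := hp _ h1
        rw [← h2] at this
        exact absurd (hmax' _ hxs) (by omega)
    have hy' : c'.getVert (c'.length - 1) = p u := by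
      rcases hadj _ _ hy with ⟨h1, h2⟩ | ⟨_, h⟩
      · exfalso
        have := hp _ h1
        rw [← h2] at this
        exact absurd (hmax' _ hys) (by omega)
      · exact h
    have heq : c'.getVert (0 + 1) = c'.getVert ((c'.length - 2) + 1) := by
      rw [show c'.length - 2 + 1 = c'.length - 1 by omega]
      rw [hx', hy']
    have hnodup : c'.support.tail.Nodup := hc'.2
    rw [walk_support_tail_eq_map] at hnodup
    have := @List.inj_on_of_nodup_map _ _ _ _ hnodup 0 (List.mem_range.mpr (by omega))
      (c'.length - 2) (List.mem_range.mpr (by omega)) heq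
    omega


def mmstpPar {n : ℕ} (S : Finset (Fin n)) (v : Fin n × Fin 3) : Fin n × Fin 3 :=
  if v.2 = 1 then (if v.1 ∈ S then (v.1, 0) else (v.1, 2))
  else if v.2 = 2 then (v.1, 0)
  else (⟨v.1.1 - 1, lt_of_le_of_lt (Nat.sub_le _ _) v.1.isLt⟩, 0)

def mmstpRk {n : ℕ} (v : Fin n × Fin 3) : ℕ :=
  3 * v.1.1 + (if v.2 = 0 then 0 else if v.2 = 2 then 1 else 2)

theorem mmstp_aux (n : ℕ) (hn : 0 < n)
    (a : Fin n → ℝ) (ha : ∀ i, 0 ≤ a i) (K : ℝ) :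
    (∃ S : Finset (Fin n), ∑ i ∈ S, a i = K) ↔
      ∃ T : Finset (Sym2 (Fin n × Fin 3)),
        (↑T ⊆ (SimpleGraph.fromRel (fun p q : Fin n × Fin 3 =>
            p.1 = q.1 ∨ (p.2 = 0 ∧ q.2 = 0 ∧ (q.1 : ℕ) = (p.1 : ℕ) + 1))).edgeSet
          ∧ (SimpleGraph.fromEdgeSet (↑T : Set (Sym2 (Fin n × Fin 3)))).IsTree) ∧
        ((∑ e ∈ T, ∑ i : Fin n,
            if e = s((i, (0 : Fin 3)), (i, (1 : Fin 3))) then a i else 0) + (-K)) *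
          ((∑ e ∈ T, ∑ i : Fin n,
            if e = s((i, (0 : Fin 3)), (i, (1 : Fin 3))) then a i else 0) + (-K)) ≤ 0 := by
  classical
  set r : Fin n × Fin 3 := ((⟨0, hn⟩ : Fin n), (0 : Fin 3)) with hr
  constructor
  · rintro ⟨S, hS⟩
    set p := mmstpPar S with hpdef
    have hrk : ∀ v : Fin n × Fin 3, v ≠ r → mmstpRk (p v) < mmstpRk v := by
      rintro ⟨i, j⟩ hne
      fin_cases j
      · have hi : i.1 ≠ 0 := by
          intro h
          exact hne (by ext <;> simp [hr, h])
        simp [hpdef, mmstpPar, mmstpRk]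
        omega
      · by_cases hS' : i ∈ S <;> simp [hpdef, mmstpPar, mmstpRk, hS']
      · simp [hpdef, mmstpPar, mmstpRk]
    refine ⟨Finset.image (fun v => s(v, p v)) (Finset.univ.erase r), ⟨?_, ?_⟩, ?_⟩
    · -- subset of edge set
      intro e he
      simp only [Finset.coe_image, Set.mem_image, Finset.mem_coe, Finset.mem_erase] at he
      obtain ⟨v, ⟨hvr, -⟩, rfl⟩ := he
      have hne : v ≠ p v := by
        intro h
        have := hrk v hvr
        rw [← h] at this
        omega
      rw [SimpleGraph.mem_edgeSet, SimpleGraph.fromRel_adj]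
      refine ⟨hne, ?_⟩
      obtain ⟨i, j⟩ := v
      fin_cases j
      · right
        have hi : i.1 ≠ 0 := by
          intro h
          exact hvr (by ext <;> simp [hr, h])
        simp [hpdef, mmstpPar]
        omega
      · left
        by_cases hS' : i ∈ S <;> simp [hpdef, mmstpPar, hS']
      · left
        simp [hpdef, mmstpPar]
    · -- is a tree
      have hcoe : (↑(Finset.image (fun v => s(v, p v)) (Finset.univ.erase r)) :
          Set (Sym2 (Fin n × Fin 3))) = {e | ∃ v, v ≠ r ∧ e = s(v, p v)} := by
        ext e
        simp only [Finset.coe_image, Set.mem_image, Finset.mem_coe, Finset.mem_erase,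
          Set.mem_setOf_eq, Finset.mem_univ, and_true]
        constructor
        · rintro ⟨v, hv, rfl⟩; exact ⟨v, hv, rfl⟩
        · rintro ⟨v, hv, rfl⟩; exact ⟨v, hv, rfl⟩
      rw [hcoe]
      haveI : Nonempty (Fin n × Fin 3) := ⟨r⟩
      exact isTree_of_parent r p mmstpRk hrk
    · -- objective value
      have hmem : ∀ i : Fin n,
          (s((i, (0 : Fin 3)), (i, (1 : Fin 3))) ∈
            Finset.image (fun v => s(v, p v)) (Finset.univ.erase r)) ↔ i ∈ S := by
        intro i
        simp only [Finset.mem_image, Finset.mem_erase, Finset.mem_univ, and_true]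
        constructor
        · rintro ⟨v, hvr, hv⟩
          rw [Sym2.eq_iff] at hv
          rcases hv with ⟨rfl, hv2⟩ | ⟨rfl, hv2⟩
          · exfalso
            have : (p (i, (0 : Fin 3))).2 = 0 := by simp [hpdef, mmstpPar]
            rw [hv2] at this
            simp at this
          · by_contra hS'
            have : p (i, (1 : Fin 3)) = (i, (2 : Fin 3)) := by simp [hpdef, mmstpPar, hS']
            rw [this] at hv2
            simp [Prod.ext_iff] at hv2
        · intro hiS
          refine ⟨(i, (1 : Fin 3)), ?_, ?_⟩
          · simp [hr, Prod.ext_iff]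
          · have : p (i, (1 : Fin 3)) = (i, (0 : Fin 3)) := by simp [hpdef, mmstpPar, hiS]
            rw [this, Sym2.eq_swap]
      rw [Finset.sum_comm]
      have hsum : ∀ i : Fin n,
          (∑ e ∈ Finset.image (fun v => s(v, p v)) (Finset.univ.erase r),
            if e = s((i, (0 : Fin 3)), (i, (1 : Fin 3))) then a i else 0) =
          if i ∈ S then a i else 0 := by
        intro i
        rw [Finset.sum_ite_eq' _ s((i, (0 : Fin 3)), (i, (1 : Fin 3))) (fun _ => a i)]
        simp [hmem i]
      rw [Finset.sum_congr rfl (fun i _ => hsum i)]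
      rw [Finset.sum_ite_mem, Finset.univ_inter, hS]
      simp
  · rintro ⟨T, -, hobj⟩
    set W := ∑ e ∈ T, ∑ i : Fin n,
        if e = s((i, (0 : Fin 3)), (i, (1 : Fin 3))) then a i else 0 with hW
    have hWK : W = K := by nlinarith [mul_self_nonneg (W + -K)]
    refine ⟨Finset.univ.filter (fun i => s((i, (0 : Fin 3)), (i, (1 : Fin 3))) ∈ T), ?_⟩
    rw [Finset.sum_filter, ← hWK, hW, Finset.sum_comm]
    refine Finset.sum_congr rfl fun i _ => ?_
    rw [Finset.sum_ite_eq' _ s((i, (0 : Fin 3)), (i, (1 : Fin 3))) (fun _ => a i)]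

/-- Correctness of the reduction from subset sum to the multiplicative minimum spanning
tree problem with nonnegative weights `d¹ = d² = d` and `δ₁ = δ₂ = -K`: the constructed
instance (linked triangles) has a spanning tree of objective value `≤ 0` iff the subset
sum instance has a solution. -/
theorem mmstp_subset_sum_reduction (n : ℕ) (hn : 0 < n)
    (a : Fin n → ℝ) (ha : ∀ i, 0 ≤ a i) (K : ℝ) :
    (∃ S : Finset (Fin n), ∑ i ∈ S, a i = K) ↔
      ∃ T : Finset (Sym2 (Fin n × Fin 3)),
        IsSpanningTree
          (SimpleGraph.fromRel (fun p q : Fin n × Fin 3 =>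
            p.1 = q.1 ∨ (p.2 = 0 ∧ q.2 = 0 ∧ (q.1 : ℕ) = (p.1 : ℕ) + 1))) T ∧
        ((∑ e ∈ T, ∑ i : Fin n,
            if e = s((i, (0 : Fin 3)), (i, (1 : Fin 3))) then a i else 0) + (-K)) *
          ((∑ e ∈ T, ∑ i : Fin n,
            if e = s((i, (0 : Fin 3)), (i, (1 : Fin 3))) then a i else 0) + (-K)) ≤ 0 := by
  exact mmstp_aux n hn a ha K
end

section
/- Let G be a connected graph whose edge set is partitioned into biconnected components, and let Q be a symmetric cost matrix such that Q = A + Aᵀ + D where D is diagonal and A = (a(i,j)) satisfies a(i,j) = a(i,k) whenever edges j and k lie in the same biconnected component. Then for every spanning tree T, Σ_{f∈T} a(i,f) is a constant r(i) independent of T, and Q(T) = Σ_{e∈T} (2r(e) + d(e,e)). Hence Q is linearizable with linearization c(i) = 2r(i) + d(i,i). -/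
open Finset

open SimpleGraph in
private lemma reach_aux {V : Type*} {G : SimpleGraph V} {x y a b : V}
    (hxy : (G \ SimpleGraph.fromEdgeSet {s(x, y)}).Reachable x y) (w : G.Walk a b) :
    (G \ SimpleGraph.fromEdgeSet {s(x, y)}).Reachable a b := by
  induction w with
  | nil => exact Reachable.refl _
  | @cons p q r h w ih =>
    refine Reachable.trans ?_ ih
    by_cases hc : s(p, q) = s(x, y)
    · rw [Sym2.eq_iff] at hc
      rcases hc with ⟨rfl, rfl⟩ | ⟨rfl, rfl⟩
      · exact hxy
      · exact hxy.symm
    · exact Adj.reachable ⟨h, fun hadj => hc (by simpa using hadj.1)⟩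

open SimpleGraph in
private lemma spanningTree_subset_eq {V : Type*} {G : SimpleGraph V}
    {T T' : Finset (Sym2 V)} (hT : IsSpanningTree G T) (hT' : IsSpanningTree G T')
    (hsub : T ⊆ T') : T = T' := by
  classical
  refine Finset.Subset.antisymm hsub ?_
  intro g hg
  by_contra hgT
  induction g using Sym2.ind with
  | _ x y =>
  have hadj : G.Adj x y := hT'.1 hg
  have hne : x ≠ y := hadj.ne
  obtain ⟨p0⟩ := hT.2.isConnected.preconnected x y
  set p := p0.toPath with hp
  have hpe : ∀ e' ∈ p.1.edges, e' ∈ (↑T : Set (Sym2 V)) := by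
    intro e' he'
    have := Walk.edges_subset_edgeSet _ he'
    rw [edgeSet_fromEdgeSet] at this
    exact this.1
  have hedges : ∀ e' ∈ p.1.edges,
      e' ∈ (fromEdgeSet (↑T' : Set (Sym2 V))).edgeSet := by
    intro e' he'
    have h2 := Walk.edges_subset_edgeSet _ he'
    rw [edgeSet_fromEdgeSet] at h2 ⊢
    exact ⟨hsub (hpe e' he'), h2.2⟩
  set q := p.1.transfer _ hedges with hqdef
  have hqp : q.IsPath := p.2.transfer _
  have hadj' : (fromEdgeSet (↑T' : Set (Sym2 V))).Adj y x :=
    (fromEdgeSet_adj _).mpr ⟨by rwa [Sym2.eq_swap], hne.symm⟩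
  have hgq : s(y, x) ∉ q.edges := by
    rw [hqdef, Walk.edges_transfer, Sym2.eq_swap]
    intro hmem
    exact hgT (hpe _ hmem)
  exact hT'.2.IsAcyclic _ (Path.cons_isCycle ⟨q, hqp⟩ hadj' hgq)

open SimpleGraph in
private lemma sum_tree_invariant {V : Type*} [DecidableEq (Sym2 V)] (G : SimpleGraph V) (w : Sym2 V → ℝ)
    (hw : ∀ j k, OnCommonCycle G j k → w j = w k) :
    ∀ (n : ℕ) (T T' : Finset (Sym2 V)), (T \ T').card ≤ n →
      IsSpanningTree G T → IsSpanningTree G T' → ∑ f ∈ T, w f = ∑ f ∈ T', w f := by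
  classical
  intro n
  induction n with
  | zero =>
    intro T T' hcard hT hT'
    rw [Nat.le_zero, Finset.card_eq_zero, Finset.sdiff_eq_empty_iff_subset] at hcard
    rw [spanningTree_subset_eq hT hT' hcard]
  | succ n ih =>
    intro T T' hcard hT hT'
    rcases Finset.eq_empty_or_nonempty (T \ T') with hempty | ⟨e0, he0⟩
    · rw [spanningTree_subset_eq hT hT' (Finset.sdiff_eq_empty_iff_subset.mp hempty)]
    · obtain ⟨u, v, heuv⟩ := Sym2.exists.mp ⟨e0, he0⟩
      set E : Sym2 V := s(u, v) with hEdef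
      have heT : E ∈ T := (Finset.mem_sdiff.mp heuv).1
      have heT' : E ∉ T' := (Finset.mem_sdiff.mp heuv).2
      have hadjG : G.Adj u v := hT.1 heT
      have hne : u ≠ v := hadjG.ne
      -- path from u to v in the tree T'
      obtain ⟨p0⟩ := hT'.2.isConnected.preconnected u v
      set p := p0.toPath with hpdef
      have hpe : ∀ e' ∈ p.1.edges, e' ∈ (↑T' : Set (Sym2 V)) := by
        intro e' he'
        have := Walk.edges_subset_edgeSet _ he'
        rw [edgeSet_fromEdgeSet] at this
        exact this.1
      set H := fromEdgeSet (insert E (↑T' : Set (Sym2 V))) with hHdef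
      have hedges : ∀ e' ∈ p.1.edges, e' ∈ H.edgeSet := by
        intro e' he'
        have h2 := Walk.edges_subset_edgeSet _ he'
        rw [edgeSet_fromEdgeSet] at h2
        rw [hHdef, edgeSet_fromEdgeSet]
        exact ⟨Set.mem_insert_of_mem _ h2.1, h2.2⟩
      set q := p.1.transfer H hedges with hqdef
      have hqp : q.IsPath := p.2.transfer _
      have hadjH : H.Adj v u :=
        (fromEdgeSet_adj _).mpr ⟨by rw [Sym2.eq_swap]; exact Set.mem_insert _ _, hne.symm⟩
      have hEq : s(v, u) ∉ q.edges := by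
        rw [hqdef, Walk.edges_transfer, Sym2.eq_swap]
        intro hmem
        exact heT' (hpe _ hmem)
      set c := Walk.cons hadjH q with hcdef
      have hc : c.IsCycle := Path.cons_isCycle ⟨q, hqp⟩ hadjH hEq
      have hEc : E ∈ c.edges := by
        rw [hcdef, Walk.edges_cons]
        exact List.mem_cons.mpr (Or.inl Sym2.eq_swap)
      have hHsub : ∀ e' ∈ c.edges, e' ∈ G.edgeSet := by
        intro e' he'
        have h2 := Walk.edges_subset_edgeSet _ he'
        rw [hHdef, edgeSet_fromEdgeSet] at h2
        rcases h2.1 with h3 | h3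
        · rw [h3]; exact hadjG
        · exact hT'.1 h3
      have hcommon : ∀ f ∈ c.edges, OnCommonCycle G E f := by
        intro f hf
        exact ⟨v, c.transfer G hHsub, hc.transfer _,
          by rw [Walk.edges_transfer]; exact hEc, by rw [Walk.edges_transfer]; exact hf⟩
      -- find an edge of c not in T
      have hex : ∃ f, f ∈ c.edges ∧ f ∉ T ∧ f ∈ (↑T' : Set (Sym2 V)) ∧ f ≠ E := by
        by_contra hno
        push_neg at hno
        have hall : ∀ f ∈ c.edges, f ∈ (fromEdgeSet (↑T : Set (Sym2 V))).edgeSet := by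
          intro f hf
          have h2 := Walk.edges_subset_edgeSet _ hf
          rw [hHdef, edgeSet_fromEdgeSet] at h2
          rw [edgeSet_fromEdgeSet]
          refine ⟨?_, h2.2⟩
          by_contra hfT
          rcases h2.1 with h3 | h3
          · -- f = E : then f ∈ T, contradiction
            exact hfT (h3 ▸ heT)
          · have hfeq := hno f hf (fun hm => hfT hm) h3
            exact hfT (by rw [hfeq]; exact heT)
        exact hT.2.IsAcyclic _ (hc.transfer hall)
      obtain ⟨x, y, hfc, hfT, hfT', hfE⟩ := Sym2.exists.mp hex
      set F : Sym2 V := s(x, y) with hFdef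
      -- reachability after deleting F from H
      have hreach : H.Adj x y ∧ (H \ fromEdgeSet {F}).Reachable x y :=
        adj_and_reachable_delete_edges_iff_exists_cycle.mpr ⟨v, c, hc, hfc⟩
      set T'' : Finset (Sym2 V) := insert E (T'.erase F) with hT''def
      have hcoe : (↑T'' : Set (Sym2 V)) = insert E ((↑T' : Set (Sym2 V)) \ {F}) := by
        rw [hT''def, Finset.coe_insert, Finset.coe_erase]
      have hgraph : fromEdgeSet (↑T'' : Set (Sym2 V)) = H \ fromEdgeSet {F} := by
        ext a b
        rw [hcoe, hHdef]
        simp only [fromEdgeSet_adj, sdiff_adj, Set.mem_insert_iff, Set.mem_diff,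
          Set.mem_singleton_iff]
        constructor
        · rintro ⟨h1 | ⟨h1, h2⟩, hab⟩
          · exact ⟨⟨Or.inl h1, hab⟩, fun hbad => hfE (by rw [← hbad.1]; exact h1)⟩
          · exact ⟨⟨Or.inr h1, hab⟩, fun hbad => h2 hbad.1⟩
        · rintro ⟨⟨h1 | h1, hab⟩, h2⟩
          · exact ⟨Or.inl h1, hab⟩
          · refine ⟨Or.inr ⟨h1, fun hFeq => h2 ⟨hFeq, hab⟩⟩, hab⟩
      have hT''G : (↑T'' : Set (Sym2 V)) ⊆ G.edgeSet := by
        rw [hcoe]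
        rintro g (rfl | ⟨hg, -⟩)
        · exact hadjG
        · exact hT'.1 hg
      have hHconn : H.Connected :=
        hT'.2.isConnected.mono (fromEdgeSet_mono (Set.subset_insert _ _))
      have hconn'' : (fromEdgeSet (↑T'' : Set (Sym2 V))).Connected := by
        rw [hgraph]
        haveI := hHconn.nonempty
        exact Connected.mk (fun a b => reach_aux hreach.2 (hHconn.preconnected a b).some)
      -- F is on the path p
      have hFp : F ∈ p.1.edges := by
        have := hfc
        rw [hcdef, Walk.edges_cons, List.mem_cons] at this
        rcases this with h3 | h3
        · exact absurd (h3.trans Sym2.eq_swap) hfE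
        · rwa [hqdef, Walk.edges_transfer] at h3
      have hacyc : (fromEdgeSet (↑T'' : Set (Sym2 V))).IsAcyclic := by
        intro w₀ c₂ hc₂
        by_cases hE2 : E ∈ c₂.edges
        · have hr2 := (adj_and_reachable_delete_edges_iff_exists_cycle
            (G := fromEdgeSet (↑T'' : Set (Sym2 V))) (v := u) (w := v)).mpr ⟨w₀, c₂, hc₂, hE2⟩
          obtain ⟨w₂⟩ := hr2.2
          have hw₂e : ∀ e' ∈ w₂.edges, e' ∈ (↑T' : Set (Sym2 V)) ∧ ¬ e'.IsDiag ∧ e' ≠ F := by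
            intro e' he'
            have h2 := Walk.edges_subset_edgeSet _ he'
            rw [deleteEdges, edgeSet_sdiff, edgeSet_fromEdgeSet, edgeSet_fromEdgeSet, hcoe] at h2
            obtain ⟨⟨h3 | ⟨h3, h4⟩, h5⟩, h6⟩ := h2
            · exact absurd ((by simpa using h6 : e' = E → e'.IsDiag) h3) h5
            · exact ⟨h3, h5, h4⟩
          have hw₂e' : ∀ e' ∈ w₂.edges, e' ∈ (fromEdgeSet (↑T' : Set (Sym2 V))).edgeSet := by
            intro e' he'
            rw [edgeSet_fromEdgeSet]
            exact ⟨(hw₂e e' he').1, (hw₂e e' he').2.1⟩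
          set q₂ := (w₂.transfer _ hw₂e').toPath with hq₂def
          have hFq₂ : F ∉ q₂.1.edges := by
            intro hmem
            have := Walk.edges_toPath_subset _ hmem
            rw [Walk.edges_transfer] at this
            exact (hw₂e F this).2.2 rfl
          have := hT'.2.IsAcyclic.path_unique q₂ p
          rw [this] at hFq₂
          exact hFq₂ hFp
        · have hall : ∀ e' ∈ c₂.edges, e' ∈ (fromEdgeSet (↑T' : Set (Sym2 V))).edgeSet := by
            intro e' he'
            have h2 := Walk.edges_subset_edgeSet _ he'
            rw [edgeSet_fromEdgeSet, hcoe] at h2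
            rw [edgeSet_fromEdgeSet]
            rcases h2.1 with h3 | ⟨h3, -⟩
            · exact absurd (h3 ▸ he') hE2
            · exact ⟨h3, h2.2⟩
          exact hT'.2.IsAcyclic _ (hc₂.transfer hall)
      have hT'' : IsSpanningTree G T'' := ⟨hT''G, ⟨hconn'', hacyc⟩⟩
      -- measure decreases
      have hsub'' : T \ T'' ⊆ (T \ T').erase E := by
        intro g hg
        obtain ⟨hg1, hg2⟩ := Finset.mem_sdiff.mp hg
        rw [Finset.mem_erase]
        constructor
        · rintro rfl; exact hg2 (Finset.mem_insert_self _ _)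
        · rw [Finset.mem_sdiff]
          refine ⟨hg1, fun hgT' => ?_⟩
          rcases eq_or_ne g F with rfl | hgF
          · exact hfT hg1
          · exact hg2 (Finset.mem_insert_of_mem (Finset.mem_erase.mpr ⟨hgF, hgT'⟩))
      have hcard'' : (T \ T'').card ≤ n := by
        have h1 := Finset.card_le_card hsub''
        rw [Finset.card_erase_of_mem heuv] at h1
        omega
      have hsum1 := ih T T'' hcard'' hT hT''
      have hFmem : F ∈ T' := hfT'
      have hEF : w E = w F := hw E F (hcommon F hfc)
      have hEnot : E ∉ T'.erase F := fun h => heT' (Finset.mem_of_mem_erase h)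
      rw [hsum1, hT''def, Finset.sum_insert hEnot, hEF, Finset.add_sum_erase _ w hFmem]

/-- Sufficient condition for linearizability (Lemma 6): if `Q = A + Aᵀ + D` where `D` is
diagonal and each row of `A` is constant on every biconnected component, then the row sums
`r(i) = ∑_{f ∈ T} A i f` are independent of the spanning tree `T`,
`Q(T) = ∑_{e ∈ T} (2 r(e) + d(e,e))`, and `c(i) = 2 r(i) + d(i,i)` linearizes `Q`. -/
theorem sum_structure_linearizable {V : Type*} [Fintype V] (G : SimpleGraph V)
    (hconn : G.Connected) (Q A D : Sym2 V → Sym2 V → ℝ)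
    (hsymm : ∀ e f, Q e f = Q f e)
    (hQ : ∀ e f, Q e f = A e f + A f e + D e f)
    (hD : ∀ e f, e ≠ f → D e f = 0)
    (hA : ∀ i j k, OnCommonCycle G j k → A i j = A i k) :
    ∃ r : Sym2 V → ℝ,
      (∀ (i : Sym2 V) (T : Finset (Sym2 V)), IsSpanningTree G T → ∑ f ∈ T, A i f = r i) ∧
      (∀ T : Finset (Sym2 V), IsSpanningTree G T →
        treeCost Q T = ∑ e ∈ T, (2 * r e + D e e)) ∧
      IsLinearization G Q (fun i => 2 * r i + D i i) := by
  classical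
  have key : ∀ (i : Sym2 V) (T T' : Finset (Sym2 V)), IsSpanningTree G T →
      IsSpanningTree G T' → ∑ f ∈ T, A i f = ∑ f ∈ T', A i f := fun i T T' hT hT' =>
    sum_tree_invariant G (A i) (fun j k h => hA i j k h) ((T \ T').card) T T' le_rfl hT hT'
  set r : Sym2 V → ℝ := fun i =>
    if h : ∃ T : Finset (Sym2 V), IsSpanningTree G T then ∑ f ∈ h.choose, A i f else 0 with hrdef
  have hr : ∀ (i : Sym2 V) (T : Finset (Sym2 V)), IsSpanningTree G T →
      ∑ f ∈ T, A i f = r i := by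
    intro i T hT
    have hex : ∃ T : Finset (Sym2 V), IsSpanningTree G T := ⟨T, hT⟩
    rw [hrdef]
    simp only [dif_pos hex]
    exact key i T hex.choose hT hex.choose_spec
  have hcost : ∀ T : Finset (Sym2 V), IsSpanningTree G T →
      treeCost Q T = ∑ e ∈ T, (2 * r e + D e e) := by
    intro T hT
    calc treeCost Q T
        = ∑ e ∈ T, ∑ f ∈ T, (A e f + A f e + D e f) := by
          unfold treeCost; simp only [hQ]
      _ = ((∑ e ∈ T, ∑ f ∈ T, A e f) + ∑ e ∈ T, ∑ f ∈ T, A f e)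
            + ∑ e ∈ T, ∑ f ∈ T, D e f := by
          simp [Finset.sum_add_distrib]
      _ = ((∑ e ∈ T, r e) + ∑ e ∈ T, r e) + ∑ e ∈ T, D e e := by
          rw [Finset.sum_comm (f := fun e f => A f e)]
          congr 1
          · congr 1
            · exact Finset.sum_congr rfl fun e _ => hr e T hT
            · exact Finset.sum_congr rfl fun f _ => hr f T hT
          · exact Finset.sum_congr rfl fun e he =>
              Finset.sum_eq_single_of_mem e he fun b _ hb => hD e b (Ne.symm hb)
      _ = ∑ e ∈ T, (2 * r e + D e e) := by
          rw [← Finset.sum_add_distrib, ← Finset.sum_add_distrib]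
          exact Finset.sum_congr rfl fun e _ => by ring
  exact ⟨r, hr, hcost, fun T hT => hcost T hT⟩
end

section
/- Let Q be a linearizable symmetric cost matrix for the QMSTP on a simple graph G with n vertices, and let a, b, x, y be four distinct edges admitting an {a,b}-{x,y}-backbone B (a set of n−3 edges such that B ∪ {e,f} is a spanning tree for every e ∈ {a,b}, f ∈ {x,y}). Then q(b,x) − q(a,x) = q(b,y) − q(a,y). -/
open Finset

lemma spanningTree_card {V : Type*} [Fintype V] [DecidableEq V] (G : SimpleGraph V)
    (T : Finset (Sym2 V)) (h : IsSpanningTree G T) : T.card + 1 = Fintype.card V := by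
  obtain ⟨hsub, htree⟩ := h
  have hE : (SimpleGraph.fromEdgeSet (↑T : Set (Sym2 V))).edgeSet = ↑T := by
    rw [SimpleGraph.edgeSet_fromEdgeSet]
    ext e
    simp only [Set.mem_diff, Set.mem_setOf_eq, Finset.mem_coe, and_iff_left_iff_imp]
    intro he
    exact G.not_isDiag_of_mem_edgeSet (hsub he)
  haveI : Fintype ((SimpleGraph.fromEdgeSet (↑T : Set (Sym2 V))).edgeSet) :=
    (hE ▸ T.finite_toSet).fintype
  have hfin : (SimpleGraph.fromEdgeSet (↑T : Set (Sym2 V))).edgeFinset = T := by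
    ext e
    simp [SimpleGraph.mem_edgeFinset, hE]
  have := htree.card_edgeFinset
  rwa [hfin] at this

lemma insert_treeCost {V : Type*} [DecidableEq V] (Q : Sym2 V → Sym2 V → ℝ)
    (hsymm : ∀ e f, Q e f = Q f e) (e : Sym2 V) (S : Finset (Sym2 V)) (he : e ∉ S) :
    treeCost Q (insert e S) = Q e e + 2 * (∑ g ∈ S, Q e g) + treeCost Q S := by
  unfold treeCost
  rw [Finset.sum_insert he]
  rw [Finset.sum_insert he]
  have : ∀ u ∈ S, ∑ v ∈ insert e S, Q u v = Q u e + ∑ v ∈ S, Q u v := by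
    intro u hu
    rw [Finset.sum_insert he]
  rw [Finset.sum_congr rfl this, Finset.sum_add_distrib]
  have h2 : ∑ u ∈ S, Q u e = ∑ u ∈ S, Q e u := by
    exact Finset.sum_congr rfl fun u _ => hsymm u e
  rw [h2]
  ring

/-- Backbone lemma: if `Q` is a linearizable symmetric cost matrix and `B` is an
`{a,b}`-`{x,y}`-backbone, then `q(b,x) - q(a,x) = q(b,y) - q(a,y)`. -/
theorem backbone_difference {V : Type*} [Fintype V] [DecidableEq V] (G : SimpleGraph V)
    (Q : Sym2 V → Sym2 V → ℝ) (hsymm : ∀ e f, Q e f = Q f e)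
    (hlin : Linearizable G Q)
    (a b x y : Sym2 V)
    (ha : a ∈ G.edgeSet) (hb : b ∈ G.edgeSet) (hx : x ∈ G.edgeSet) (hy : y ∈ G.edgeSet)
    (hdist : [a, b, x, y].Pairwise (· ≠ ·))
    (B : Finset (Sym2 V)) (hcard : B.card = Fintype.card V - 3)
    (hback : ∀ e ∈ ({a, b} : Set (Sym2 V)), ∀ f ∈ ({x, y} : Set (Sym2 V)),
      IsSpanningTree G (insert e (insert f B))) :
    Q b x - Q a x = Q b y - Q a y := by
  obtain ⟨c, hc⟩ := hlin
  simp only [List.pairwise_cons, List.mem_cons, List.mem_singleton, ne_eq] at hdist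
  have hab : a ≠ b := hdist.1 b (by tauto)
  have hax : a ≠ x := hdist.1 x (by tauto)
  have hay : a ≠ y := hdist.1 y (by tauto)
  have hbx : b ≠ x := hdist.2.1 x (by tauto)
  have hby : b ≠ y := hdist.2.1 y (by tauto)
  have key : ∀ e f : Sym2 V, e ≠ f → IsSpanningTree G (insert e (insert f B)) →
      Q e e + 2 * (Q e f + ∑ g ∈ B, Q e g) + (Q f f + 2 * (∑ g ∈ B, Q f g) + treeCost Q B)
        = c e + (c f + ∑ g ∈ B, c g) := by
    intro e f hef hT
    have hcardT := spanningTree_card G _ hT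
    have hfB : f ∉ B := by
      intro hf
      have h1 : 1 ≤ B.card := Finset.card_pos.mpr ⟨f, hf⟩
      have h2 : (insert e (insert f B)).card ≤ B.card + 1 := by
        rw [Finset.insert_eq_self.mpr hf]
        exact Finset.card_insert_le _ _
      omega
    have heB : e ∉ B := by
      intro hee
      have h1 : 1 ≤ B.card := Finset.card_pos.mpr ⟨e, hee⟩
      have h2 : (insert e (insert f B)).card ≤ B.card + 1 := by
        rw [Finset.insert_eq_self.mpr (Finset.mem_insert_of_mem hee)]
        exact Finset.card_insert_le _ _
      omega
    have he' : e ∉ insert f B := by simp [hef, heB]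
    have hQ := hc _ hT
    rw [insert_treeCost Q hsymm e _ he', insert_treeCost Q hsymm f _ hfB,
      Finset.sum_insert hfB, Finset.sum_insert he', Finset.sum_insert hfB] at hQ
    linarith
  have hax' := key a x hax (hback a (by simp) x (by simp))
  have hay' := key a y hay (hback a (by simp) y (by simp))
  have hbx' := key b x hbx (hback b (by simp) x (by simp))
  have hby' := key b y hby (hback b (by simp) y (by simp))
  linarith
end

section
/- A symmetric cost matrix Q for the QMSTP on the complete graph K_n is linearizable if and only if Q is a symmetric weak sum matrix, i.e., there exists a vector w with q(i,j) = w(i) + w(j) for all distinct edges i ≠ j. -/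
open Finset

section Aux
open SimpleGraph
variable {V : Type*} [Fintype V] [DecidableEq V]

def pTree (p : V → V) (r : V) : Finset (Sym2 V) :=
  (Finset.univ.erase r).image (fun x => s(x, p x))

lemma pTree_mem {p : V → V} {r : V} {e : Sym2 V} :
    e ∈ pTree p r ↔ ∃ x, x ≠ r ∧ s(x, p x) = e := by
  simp [pTree, Finset.mem_image]

lemma iter_rho_le {p : V → V} {r : V} {ρ : V → ℕ} (hpr : p r = r)
    (hρ : ∀ x, x ≠ r → ρ (p x) < ρ x) : ∀ (n : ℕ) (y : V), ρ (p^[n] y) ≤ ρ y := by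
  intro n
  induction n with
  | zero => intro y; simp
  | succ n ih =>
    intro y
    rw [Function.iterate_succ_apply]
    by_cases hy : y = r
    · rw [hy, hpr]; exact ih r
    · exact le_trans (ih (p y)) (le_of_lt (hρ y hy))

theorem pTree_isSpanningTree (p : V → V) (r : V) (ρ : V → ℕ) (hpr : p r = r)
    (hρ : ∀ x, x ≠ r → ρ (p x) < ρ x) : IsSpanningTree ⊤ (pTree p r) := by
  have hne : ∀ x, x ≠ r → p x ≠ x := by
    intro x hx h
    have := hρ x hx
    rw [h] at this
    exact lt_irrefl _ this
  set G := SimpleGraph.fromEdgeSet (↑(pTree p r) : Set (Sym2 V)) with hG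
  have hadj : ∀ u v : V, G.Adj u v ↔ (s(u,v) ∈ pTree p r ∧ u ≠ v) := by
    intro u v
    rw [hG, SimpleGraph.fromEdgeSet_adj]
    simp
  -- adjacency from parent
  have hadjp : ∀ x, x ≠ r → G.Adj x (p x) := by
    intro x hx
    rw [hadj]
    exact ⟨pTree_mem.2 ⟨x, hx, rfl⟩, (Ne.symm (hne x hx))⟩
  constructor
  · intro e he
    rw [Finset.mem_coe, pTree_mem] at he
    obtain ⟨x, hx, rfl⟩ := he
    rw [SimpleGraph.edgeSet_top]
    simp [Sym2.isDiag_iff_proj_eq]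
    exact fun h => hne x hx h.symm
  constructor
  · -- connected
    have hreach : ∀ (n : ℕ) (u : V), ρ u ≤ n → G.Reachable u r := by
      intro n
      induction n with
      | zero =>
        intro u hu
        by_cases h : u = r
        · subst h; exact Reachable.refl _
        · exact absurd (lt_of_lt_of_le (hρ u h) hu) (Nat.not_lt_zero _)
      | succ n ih =>
        intro u hu
        by_cases h : u = r
        · subst h; exact Reachable.refl _
        · exact (hadjp u h).reachable.trans
            (ih (p u) (Nat.lt_succ_iff.mp (lt_of_lt_of_le (hρ u h) hu)))
    haveI : Nonempty V := ⟨r⟩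
    refine ⟨fun u v => ?_⟩
    exact (hreach (ρ u) u le_rfl).trans (hreach (ρ v) v le_rfl).symm
  · -- acyclic
    rw [SimpleGraph.isAcyclic_iff_forall_adj_isBridge]
    intro v w hvw
    obtain ⟨hmem, hvwne⟩ := (hadj v w).1 hvw
    rw [pTree_mem] at hmem
    obtain ⟨x, hx, hxe⟩ := hmem
    have hbr : G.IsBridge s(x, p x) := by
      rw [SimpleGraph.isBridge_iff]
      refine ?_
      -- descendant set
      set D : V → Prop := fun y => ∃ n, p^[n] y = x with hD
      have hDx : D x := ⟨0, rfl⟩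
      have hDpx : ¬ D (p x) := by
        rintro ⟨n, hn⟩
        have := iter_rho_le hpr hρ n (p x)
        rw [hn] at this
        exact absurd (lt_of_le_of_lt this (hρ x hx)) (lt_irrefl _)
      intro hreach
      set G' := G \ SimpleGraph.fromEdgeSet {s(x, p x)} with hG'
      have hcross : ∀ u u' : V, G'.Adj u u' → D u → D u' := by
        intro u u' huu' hu
        have h1 : G.Adj u u' := huu'.1
        have h2 : s(u, u') ≠ s(x, p x) := by
          intro h
          have : (SimpleGraph.fromEdgeSet {s(x, p x)}).Adj u u' := by
            rw [SimpleGraph.fromEdgeSet_adj]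
            exact ⟨by rw [h]; rfl, h1.ne⟩
          exact huu'.2 this
        obtain ⟨hmem', hne'⟩ := (hadj u u').1 h1
        rw [pTree_mem] at hmem'
        obtain ⟨y, hy, hye⟩ := hmem'
        rw [Sym2.eq_iff] at hye
        rcases hye with ⟨h1', h2'⟩ | ⟨h1', h2'⟩
        · -- y = u, p y = u'
          have hyx : y ≠ x := by
            intro h; apply h2; rw [← h1', ← h2', h]
          obtain ⟨n, hn⟩ := hu
          rw [← h1'] at hn
          cases n with
          | zero => exact absurd hn hyx
          | succ n =>
            refine ⟨n, ?_⟩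
            rw [← h2']
            rwa [Function.iterate_succ_apply] at hn
        · -- p y = u, y = u'
          obtain ⟨n, hn⟩ := hu
          rw [← h2'] at hn
          refine ⟨n + 1, ?_⟩
          rw [← h1']
          rwa [Function.iterate_succ_apply]
      have hwalk : ∀ (u u' : V) (_ : G'.Walk u u'), D u → D u' := by
        intro u u' wk
        induction wk with
        | nil => exact id
        | @cons a b c h q ih => exact fun hu => ih (hcross a b h hu)
      obtain ⟨wk⟩ := hreach
      exact hDpx (hwalk _ _ wk hDx)
    exact hxe ▸ hbr


section Swap

variable {Q : Sym2 V → Sym2 V → ℝ} {c : Sym2 V → ℝ}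

lemma treeCost_insert (hsymm : ∀ e f, Q e f = Q f e) {S : Finset (Sym2 V)} {e : Sym2 V}
    (he : e ∉ S) :
    treeCost Q (insert e S) = treeCost Q S + 2 * ∑ h ∈ S, Q e h + Q e e := by
  unfold treeCost
  rw [Finset.sum_insert he]
  have h1 : ∑ f ∈ insert e S, Q e f = Q e e + ∑ f ∈ S, Q e f := Finset.sum_insert he
  have h2 : ∀ g ∈ S, ∑ f ∈ insert e S, Q g f = Q g e + ∑ f ∈ S, Q g f :=
    fun g _ => Finset.sum_insert he
  rw [h1, Finset.sum_congr rfl h2, Finset.sum_add_distrib]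
  have h3 : ∑ g ∈ S, Q g e = ∑ g ∈ S, Q e g := Finset.sum_congr rfl (fun g _ => hsymm g e)
  rw [h3]
  ring

lemma swap_identity (hsymm : ∀ e f, Q e f = Q f e) (hc : IsLinearization ⊤ Q c)
    {S : Finset (Sym2 V)} {e e' : Sym2 V} (he : e ∉ S) (he' : e' ∉ S)
    (h1 : IsSpanningTree ⊤ (insert e S)) (h2 : IsSpanningTree ⊤ (insert e' S)) :
    Q e e + 2 * ∑ h ∈ S, Q e h - c e = Q e' e' + 2 * ∑ h ∈ S, Q e' h - c e' := by
  have A := hc _ h1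
  have B := hc _ h2
  rw [treeCost_insert hsymm he, Finset.sum_insert he] at A
  rw [treeCost_insert hsymm he', Finset.sum_insert he'] at B
  linarith

lemma rectangle (hsymm : ∀ e f, Q e f = Q f e) (hc : IsLinearization ⊤ Q c)
    {S : Finset (Sym2 V)} {e e' g g' : Sym2 V}
    (heS : e ∉ S) (he'S : e' ∉ S) (hgS : g ∉ S) (hg'S : g' ∉ S)
    (heg : e ≠ g) (heg' : e ≠ g') (he'g : e' ≠ g) (he'g' : e' ≠ g')
    (t1 : IsSpanningTree ⊤ (insert e (insert g S)))
    (t2 : IsSpanningTree ⊤ (insert e' (insert g S)))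
    (t3 : IsSpanningTree ⊤ (insert e (insert g' S)))
    (t4 : IsSpanningTree ⊤ (insert e' (insert g' S))) :
    Q e g - Q e' g = Q e g' - Q e' g' := by
  have H1 := swap_identity hsymm hc (by simp [heg, heS]) (by simp [he'g, he'S]) t1 t2
  have H2 := swap_identity hsymm hc (by simp [heg', heS]) (by simp [he'g', he'S]) t3 t4
  rw [Finset.sum_insert hgS, Finset.sum_insert hgS] at H1
  rw [Finset.sum_insert hg'S, Finset.sum_insert hg'S] at H2
  linarith

end Swap

lemma erase_decomp (K : Finset V) (r : V) (hr : r ∈ K) (f : V → Sym2 V) :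
    (Finset.univ.erase r).image f = ((Finset.univ \ K).image f) ∪ ((K.erase r).image f) := by
  rw [← Finset.image_union]
  congr 1
  ext z
  simp only [Finset.mem_erase, Finset.mem_union, Finset.mem_sdiff, Finset.mem_univ, and_true,
    true_and]
  constructor
  · intro hz
    by_cases h : z ∈ K
    · exact Or.inr ⟨hz, h⟩
    · exact Or.inl h
  · rintro (h | ⟨h, _⟩)
    · intro he; subst he; exact h hr
    · exact h

lemma pTree_eq3 {r a b x : V} (har : a ≠ r) (hbr : b ≠ r) (hxr : x ≠ r)
    (hab : a ≠ b) (hax : a ≠ x) (hbx : b ≠ x) (p : V → V)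
    (hgen : ∀ z, z ≠ r → z ≠ a → z ≠ b → z ≠ x → p z = r)
    {A B X : V} (hA : p a = A) (hB : p b = B) (hX : p x = X) :
    pTree p r =
      ((Finset.univ \ ({r,a,b,x} : Finset V)).image (fun z => s(z, r)))
        ∪ {s(a, A), s(b, B), s(x, X)} := by
  subst hA; subst hB; subst hX
  rw [pTree, erase_decomp ({r,a,b,x} : Finset V) r (by simp) (fun z => s(z, p z))]
  congr 1
  · apply Finset.image_congr
    intro z hz
    simp only [Finset.coe_sdiff, Finset.coe_univ, Set.mem_diff, Set.mem_univ, true_and,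
      Finset.mem_coe, Finset.mem_insert, Finset.mem_singleton, not_or] at hz
    obtain ⟨h1, h2, h3, h4⟩ := hz
    simp only [hgen z h1 h2 h3 h4]
  · have hK : ({r,a,b,x} : Finset V).erase r = ({a,b,x} : Finset V) := by
      rw [show ({r,a,b,x} : Finset V) = insert r {a,b,x} from rfl]
      exact Finset.erase_insert
        (by simp only [Finset.mem_insert, Finset.mem_singleton, not_or]
            exact ⟨har.symm, hbr.symm, hxr.symm⟩)
    rw [hK, show ({a,b,x} : Finset V) = insert a (insert b {x}) from rfl,
      Finset.image_insert, Finset.image_insert, Finset.image_singleton]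

section Config
variable {Q : Sym2 V → Sym2 V → ℝ} {c : Sym2 V → ℝ}

set_option maxHeartbeats 2000000 in
lemma config_beta (hsymm : ∀ e f, Q e f = Q f e) (hc : IsLinearization ⊤ Q c)
    (v a b x : V)
    (hav : a ≠ v) (hbv : b ≠ v) (hxv : x ≠ v) (hab : a ≠ b) (hax : a ≠ x) (hbx : b ≠ x) :
    Q s(v,a) s(v,x) - Q s(v,b) s(v,x) = Q s(v,a) s(a,x) - Q s(v,b) s(a,x) := by
  set Gen : Finset (Sym2 V) :=
    (Finset.univ \ ({v,a,b,x} : Finset V)).image (fun z => s(z, v)) with hGen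
  set S : Finset (Sym2 V) := Gen ∪ {s(a,b)} with hS
  have hmemGen : ∀ E : Sym2 V, E ∈ Gen → ∃ z, z ≠ v ∧ z ≠ a ∧ z ≠ b ∧ z ≠ x ∧ E = s(z,v) := by
    intro E hE
    rw [hGen, Finset.mem_image] at hE
    obtain ⟨z, hz, rfl⟩ := hE
    simp only [Finset.mem_sdiff, Finset.mem_univ, true_and, Finset.mem_insert,
      Finset.mem_singleton, not_or] at hz
    exact ⟨z, hz.1, hz.2.1, hz.2.2.1, hz.2.2.2, rfl⟩
  have hS1 : s(v,a) ∉ S := by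
    rw [hS, Finset.mem_union, Finset.mem_singleton]
    rintro (h | h)
    · obtain ⟨z, h1, h2, h3, h4, hE⟩ := hmemGen _ h
      rw [Sym2.eq_iff] at hE
      rcases hE with ⟨hh, hh'⟩ | ⟨hh, hh'⟩
      · exact hav hh'
      · exact h2 hh'.symm
    · rw [Sym2.eq_iff] at h
      rcases h with ⟨hh, hh'⟩ | ⟨hh, hh'⟩
      · exact hav hh.symm
      · exact hbv hh.symm
  have hS2 : s(v,b) ∉ S := by
    rw [hS, Finset.mem_union, Finset.mem_singleton]
    rintro (h | h)
    · obtain ⟨z, h1, h2, h3, h4, hE⟩ := hmemGen _ h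
      rw [Sym2.eq_iff] at hE
      rcases hE with ⟨hh, hh'⟩ | ⟨hh, hh'⟩
      · exact hbv hh'
      · exact h3 hh'.symm
    · rw [Sym2.eq_iff] at h
      rcases h with ⟨hh, hh'⟩ | ⟨hh, hh'⟩
      · exact hav hh.symm
      · exact hbv hh.symm
  have hS3 : s(v,x) ∉ S := by
    rw [hS, Finset.mem_union, Finset.mem_singleton]
    rintro (h | h)
    · obtain ⟨z, h1, h2, h3, h4, hE⟩ := hmemGen _ h
      rw [Sym2.eq_iff] at hE
      rcases hE with ⟨hh, hh'⟩ | ⟨hh, hh'⟩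
      · exact hxv hh'
      · exact h4 hh'.symm
    · rw [Sym2.eq_iff] at h
      rcases h with ⟨hh, hh'⟩ | ⟨hh, hh'⟩
      · exact hav hh.symm
      · exact hbv hh.symm
  have hS4 : s(a,x) ∉ S := by
    rw [hS, Finset.mem_union, Finset.mem_singleton]
    rintro (h | h)
    · obtain ⟨z, h1, h2, h3, h4, hE⟩ := hmemGen _ h
      rw [Sym2.eq_iff] at hE
      rcases hE with ⟨hh, hh'⟩ | ⟨hh, hh'⟩
      · exact hxv hh'
      · exact hav hh
    · rw [Sym2.eq_iff] at h
      rcases h with ⟨hh, hh'⟩ | ⟨hh, hh'⟩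
      · exact hbx hh'.symm
      · exact hab hh
  have hd1 : s(v,a) ≠ s(v,x) := by
    rw [Ne, Sym2.eq_iff]
    rintro (⟨h, h'⟩ | ⟨h, h'⟩)
    · exact hax h'
    · exact hav h'
  have hd2 : s(v,a) ≠ s(a,x) := by
    rw [Ne, Sym2.eq_iff]
    rintro (⟨h, h'⟩ | ⟨h, h'⟩)
    · exact hav h.symm
    · exact hxv h.symm
  have hd3 : s(v,b) ≠ s(v,x) := by
    rw [Ne, Sym2.eq_iff]
    rintro (⟨h, h'⟩ | ⟨h, h'⟩)
    · exact hbx h'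
    · exact hbv h'
  have hd4 : s(v,b) ≠ s(a,x) := by
    rw [Ne, Sym2.eq_iff]
    rintro (⟨h, h'⟩ | ⟨h, h'⟩)
    · exact hav h.symm
    · exact hxv h.symm
  -- the four spanning trees
  have t1 : IsSpanningTree ⊤ (insert s(v,a) (insert s(v,x) S)) := by
    have heq : insert s(v,a) (insert s(v,x) S) = pTree (fun z => if z = b then a else v) v := by
      rw [pTree_eq3 hav hbv hxv hab hax hbx _ (fun z _ _ h3 _ => if_neg h3)
        (A := v) (B := a) (X := v) (by simp [hab]) (by simp) (by simp [Ne.symm hbx]), ← hGen]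
      ext y
      simp only [hS, Finset.mem_insert, Finset.mem_union, Finset.mem_singleton]
      rw [show s(a,v) = s(v,a) from Sym2.eq_swap, show s(b,a) = s(a,b) from Sym2.eq_swap,
        show s(x,v) = s(v,x) from Sym2.eq_swap]
      tauto
    rw [heq]
    refine pTree_isSpanningTree _ v (fun z => if z = v then 0 else if z = b then 2 else 1)
      (by rw [if_neg (Ne.symm hbv)]) ?_
    intro z hz
    by_cases h1 : z = b
    · simp [h1, hav, hbv, hxv, hab, hax, hbx, Ne.symm hav, Ne.symm hbv, Ne.symm hxv, Ne.symm hab, Ne.symm hax, Ne.symm hbx, hz]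
    · simp [h1, hav, hbv, hxv, hab, hax, hbx, Ne.symm hav, Ne.symm hbv, Ne.symm hxv, Ne.symm hab, Ne.symm hax, Ne.symm hbx, hz]
  have t2 : IsSpanningTree ⊤ (insert s(v,b) (insert s(v,x) S)) := by
    have heq : insert s(v,b) (insert s(v,x) S) = pTree (fun z => if z = a then b else v) v := by
      rw [pTree_eq3 hav hbv hxv hab hax hbx _ (fun z _ h2 _ _ => if_neg h2)
        (A := b) (B := v) (X := v) (by simp) (by simp [Ne.symm hab]) (by simp [Ne.symm hax]), ← hGen]
      ext y
      simp only [hS, Finset.mem_insert, Finset.mem_union, Finset.mem_singleton]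
      rw [show s(b,v) = s(v,b) from Sym2.eq_swap, show s(x,v) = s(v,x) from Sym2.eq_swap]
      tauto
    rw [heq]
    refine pTree_isSpanningTree _ v (fun z => if z = v then 0 else if z = a then 2 else 1)
      (by rw [if_neg (Ne.symm hav)]) ?_
    intro z hz
    by_cases h1 : z = a
    · simp [h1, hav, hbv, hxv, hab, hax, hbx, Ne.symm hav, Ne.symm hbv, Ne.symm hxv, Ne.symm hab, Ne.symm hax, Ne.symm hbx, hz]
    · simp [h1, hav, hbv, hxv, hab, hax, hbx, Ne.symm hav, Ne.symm hbv, Ne.symm hxv, Ne.symm hab, Ne.symm hax, Ne.symm hbx, hz]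
  have t3 : IsSpanningTree ⊤ (insert s(v,a) (insert s(a,x) S)) := by
    have heq : insert s(v,a) (insert s(a,x) S) =
        pTree (fun z => if z = b then a else if z = x then a else v) v := by
      rw [pTree_eq3 hav hbv hxv hab hax hbx _ (fun z _ _ h3 h4 => by simp [h3, h4])
        (A := v) (B := a) (X := a) (by simp [hab, hax]) (by simp) (by simp [Ne.symm hbx]), ← hGen]
      ext y
      simp only [hS, Finset.mem_insert, Finset.mem_union, Finset.mem_singleton]
      rw [show s(a,v) = s(v,a) from Sym2.eq_swap, show s(b,a) = s(a,b) from Sym2.eq_swap,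
        show s(x,a) = s(a,x) from Sym2.eq_swap]
      tauto
    rw [heq]
    refine pTree_isSpanningTree _ v
      (fun z => if z = v then 0 else if z = b then 2 else if z = x then 2 else 1)
      (by rw [if_neg (Ne.symm hbv), if_neg (Ne.symm hxv)]) ?_
    intro z hz
    by_cases h1 : z = b
    · simp [h1, hav, hbv, hxv, hab, hax, hbx, Ne.symm hav, Ne.symm hbv, Ne.symm hxv, Ne.symm hab, Ne.symm hax, Ne.symm hbx, hz]
    · by_cases h2 : z = x
      · simp [h1, h2, hav, hbv, hxv, hab, hax, hbx, Ne.symm hav, Ne.symm hbv, Ne.symm hxv, Ne.symm hab, Ne.symm hax, Ne.symm hbx, hz]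
      · simp [h1, h2, hav, hbv, hxv, hab, hax, hbx, Ne.symm hav, Ne.symm hbv, Ne.symm hxv, Ne.symm hab, Ne.symm hax, Ne.symm hbx, hz]
  have t4 : IsSpanningTree ⊤ (insert s(v,b) (insert s(a,x) S)) := by
    have heq : insert s(v,b) (insert s(a,x) S) =
        pTree (fun z => if z = a then b else if z = x then a else v) v := by
      rw [pTree_eq3 hav hbv hxv hab hax hbx _ (fun z _ h2 _ h4 => by simp [h2, h4])
        (A := b) (B := v) (X := a) (by simp) (by simp [Ne.symm hab, hbx]) (by simp [Ne.symm hax]), ← hGen]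
      ext y
      simp only [hS, Finset.mem_insert, Finset.mem_union, Finset.mem_singleton]
      rw [show s(b,v) = s(v,b) from Sym2.eq_swap, show s(x,a) = s(a,x) from Sym2.eq_swap]
      tauto
    rw [heq]
    refine pTree_isSpanningTree _ v
      (fun z => if z = v then 0 else if z = a then 2 else if z = x then 3 else 1)
      (by rw [if_neg (Ne.symm hav), if_neg (Ne.symm hxv)]) ?_
    intro z hz
    by_cases h1 : z = a
    · simp [h1, hav, hbv, hxv, hab, hax, hbx, Ne.symm hav, Ne.symm hbv, Ne.symm hxv, Ne.symm hab, Ne.symm hax, Ne.symm hbx, hz]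
    · by_cases h2 : z = x
      · simp [h1, h2, hav, hbv, hxv, hab, hax, hbx, Ne.symm hav, Ne.symm hbv, Ne.symm hxv, Ne.symm hab, Ne.symm hax, Ne.symm hbx, hz]
      · simp [h1, h2, hav, hbv, hxv, hab, hax, hbx, Ne.symm hav, Ne.symm hbv, Ne.symm hxv, Ne.symm hab, Ne.symm hax, Ne.symm hbx, hz]
  exact rectangle hsymm hc hS1 hS2 hS3 hS4 hd1 hd2 hd3 hd4 t1 t2 t3 t4

set_option maxHeartbeats 1000000 in
lemma alpha0_tree1 (t u v t' w : V)
    (huv : u ≠ v) (htv : t ≠ v) (ht'v : t' ≠ v) (htu : t ≠ u) (ht'u : t' ≠ u) (htt' : t ≠ t')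
    (hwv : w ≠ v) :
    IsSpanningTree ⊤ (insert s(v,w) (insert s(u,t)
      (((Finset.univ \ ({t,u,v,t'} : Finset V)).image (fun z => s(z, t))) ∪ {s(t',t)}))) := by
  have heq : insert s(v,w) (insert s(u,t)
      (((Finset.univ \ ({t,u,v,t'} : Finset V)).image (fun z => s(z, t))) ∪ {s(t',t)}))
      = pTree (fun z => if z = v then w else t) t := by
    rw [pTree_eq3 (Ne.symm htu) (Ne.symm htv) (Ne.symm htt') huv (Ne.symm ht'u) (Ne.symm ht'v)
      _ (fun z _ _ h3 _ => if_neg h3) (A := t) (B := w) (X := t)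
      (by simp [huv]) (by simp) (by simp [ht'v])]
    ext y
    simp only [Finset.mem_insert, Finset.mem_union, Finset.mem_singleton]
    tauto
  rw [heq]
  refine pTree_isSpanningTree _ t (fun z => if z = t then 0 else if z = v then 10 else 1)
    (by simp [htv]) ?_
  intro z hz
  by_cases h1 : z = v
  · by_cases h2 : w = t <;> simp [h1, h2, huv, Ne.symm huv, htv, Ne.symm htv, ht'v, Ne.symm ht'v, htu, Ne.symm htu, ht'u, Ne.symm ht'u, htt', Ne.symm htt', hwv]
  · simp [h1, hz, huv, Ne.symm huv, htv, Ne.symm htv, ht'v, Ne.symm ht'v, htu, Ne.symm htu, ht'u, Ne.symm ht'u, htt', Ne.symm htt', hwv]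
set_option maxHeartbeats 1000000 in
lemma alpha0_tree2 (t u v t' w : V)
    (huv : u ≠ v) (htv : t ≠ v) (ht'v : t' ≠ v) (htu : t ≠ u) (ht'u : t' ≠ u) (htt' : t ≠ t')
    (hwv : w ≠ v) :
    IsSpanningTree ⊤ (insert s(v,w) (insert s(u,t')
      (((Finset.univ \ ({t,u,v,t'} : Finset V)).image (fun z => s(z, t))) ∪ {s(t',t)}))) := by
  have heq : insert s(v,w) (insert s(u,t')
      (((Finset.univ \ ({t,u,v,t'} : Finset V)).image (fun z => s(z, t))) ∪ {s(t',t)}))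
      = pTree (fun z => if z = v then w else if z = u then t' else t) t := by
    rw [pTree_eq3 (Ne.symm htu) (Ne.symm htv) (Ne.symm htt') huv (Ne.symm ht'u) (Ne.symm ht'v)
      _ (fun z _ h2 h3 _ => by simp [h2, h3]) (A := t') (B := w) (X := t)
      (by simp [huv]) (by simp) (by simp [ht'v, ht'u])]
    ext y
    simp only [Finset.mem_insert, Finset.mem_union, Finset.mem_singleton]
    tauto
  rw [heq]
  refine pTree_isSpanningTree _ t
    (fun z => if z = t then 0 else if z = v then 10 else if z = u then 2 else 1)
    (by simp [htv, htu]) ?_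
  intro z hz
  by_cases h1 : z = v
  · by_cases h2 : w = t <;> by_cases h3 : w = u <;> simp [h1, h2, h3, huv, Ne.symm huv, htv, Ne.symm htv, ht'v, Ne.symm ht'v, htu, Ne.symm htu, ht'u, Ne.symm ht'u, htt', Ne.symm htt', hwv]
  · by_cases h2 : z = u
    · simp [h1, h2, hz, huv, Ne.symm huv, htv, Ne.symm htv, ht'v, Ne.symm ht'v, htu, Ne.symm htu, ht'u, Ne.symm ht'u, htt', Ne.symm htt', hwv]
    · simp [h1, h2, hz, huv, Ne.symm huv, htv, Ne.symm htv, ht'v, Ne.symm ht'v, htu, Ne.symm htu, ht'u, Ne.symm ht'u, htt', Ne.symm htt', hwv]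

set_option maxHeartbeats 2000000 in
lemma config_alpha0 (hsymm : ∀ e f, Q e f = Q f e) (hc : IsLinearization ⊤ Q c)
    (t u v t' a' b' : V)
    (huv : u ≠ v) (htv : t ≠ v) (ht'v : t' ≠ v) (htu : t ≠ u) (ht'u : t' ≠ u) (htt' : t ≠ t')
    (hav : a' ≠ v) (hbv : b' ≠ v) (hab : a' ≠ b') :
    Q s(v,a') s(u,t) - Q s(v,b') s(u,t) = Q s(v,a') s(u,t') - Q s(v,b') s(u,t') := by
  set Gen : Finset (Sym2 V) :=
    (Finset.univ \ ({t,u,v,t'} : Finset V)).image (fun z => s(z, t)) with hGen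
  set S : Finset (Sym2 V) := Gen ∪ {s(t',t)} with hS
  have hmemGen : ∀ E : Sym2 V, E ∈ Gen → ∃ z, z ≠ t ∧ z ≠ u ∧ z ≠ v ∧ z ≠ t' ∧ E = s(z,t) := by
    intro E hE
    rw [hGen, Finset.mem_image] at hE
    obtain ⟨z, hz, rfl⟩ := hE
    simp only [Finset.mem_sdiff, Finset.mem_univ, true_and, Finset.mem_insert,
      Finset.mem_singleton, not_or] at hz
    exact ⟨z, hz.1, hz.2.1, hz.2.2.1, hz.2.2.2, rfl⟩
  have hS1 : s(v,a') ∉ S := by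
    rw [hS, Finset.mem_union, Finset.mem_singleton]
    rintro (h | h)
    · obtain ⟨z, h1, h2, h3, h4, hE⟩ := hmemGen _ h
      rw [Sym2.eq_iff] at hE
      rcases hE with ⟨hh, hh'⟩ | ⟨hh, hh'⟩
      · exact h3 hh.symm
      · exact htv hh.symm
    · rw [Sym2.eq_iff] at h
      rcases h with ⟨hh, hh'⟩ | ⟨hh, hh'⟩
      · exact ht'v hh.symm
      · exact htv hh.symm
  have hS2 : s(v,b') ∉ S := by
    rw [hS, Finset.mem_union, Finset.mem_singleton]
    rintro (h | h)
    · obtain ⟨z, h1, h2, h3, h4, hE⟩ := hmemGen _ h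
      rw [Sym2.eq_iff] at hE
      rcases hE with ⟨hh, hh'⟩ | ⟨hh, hh'⟩
      · exact h3 hh.symm
      · exact htv hh.symm
    · rw [Sym2.eq_iff] at h
      rcases h with ⟨hh, hh'⟩ | ⟨hh, hh'⟩
      · exact ht'v hh.symm
      · exact htv hh.symm
  have hS3 : s(u,t) ∉ S := by
    rw [hS, Finset.mem_union, Finset.mem_singleton]
    rintro (h | h)
    · obtain ⟨z, h1, h2, h3, h4, hE⟩ := hmemGen _ h
      rw [Sym2.eq_iff] at hE
      rcases hE with ⟨hh, hh'⟩ | ⟨hh, hh'⟩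
      · exact h2 hh.symm
      · exact htu hh.symm
    · rw [Sym2.eq_iff] at h
      rcases h with ⟨hh, hh'⟩ | ⟨hh, hh'⟩
      · exact ht'u hh.symm
      · exact htt' hh'
  have hS4 : s(u,t') ∉ S := by
    rw [hS, Finset.mem_union, Finset.mem_singleton]
    rintro (h | h)
    · obtain ⟨z, h1, h2, h3, h4, hE⟩ := hmemGen _ h
      rw [Sym2.eq_iff] at hE
      rcases hE with ⟨hh, hh'⟩ | ⟨hh, hh'⟩
      · exact htt' hh'.symm
      · exact htu hh.symm
    · rw [Sym2.eq_iff] at h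
      rcases h with ⟨hh, hh'⟩ | ⟨hh, hh'⟩
      · exact ht'u hh.symm
      · exact htu hh.symm
  have hd1 : s(v,a') ≠ s(u,t) := by
    rw [Ne, Sym2.eq_iff]
    rintro (⟨hh, hh'⟩ | ⟨hh, hh'⟩)
    · exact huv hh.symm
    · exact htv hh.symm
  have hd2 : s(v,a') ≠ s(u,t') := by
    rw [Ne, Sym2.eq_iff]
    rintro (⟨hh, hh'⟩ | ⟨hh, hh'⟩)
    · exact huv hh.symm
    · exact ht'v hh.symm
  have hd3 : s(v,b') ≠ s(u,t) := by
    rw [Ne, Sym2.eq_iff]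
    rintro (⟨hh, hh'⟩ | ⟨hh, hh'⟩)
    · exact huv hh.symm
    · exact htv hh.symm
  have hd4 : s(v,b') ≠ s(u,t') := by
    rw [Ne, Sym2.eq_iff]
    rintro (⟨hh, hh'⟩ | ⟨hh, hh'⟩)
    · exact huv hh.symm
    · exact ht'v hh.symm
  exact rectangle hsymm hc hS1 hS2 hS3 hS4 hd1 hd2 hd3 hd4
    (alpha0_tree1 t u v t' a' huv htv ht'v htu ht'u htt' hav)
    (alpha0_tree1 t u v t' b' huv htv ht'v htu ht'u htt' hbv)
    (alpha0_tree2 t u v t' a' huv htv ht'v htu ht'u htt' hav)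
    (alpha0_tree2 t u v t' b' huv htv ht'v htu ht'u htt' hbv)

set_option maxHeartbeats 1000000 in
lemma alpha1_tree1 (y1 v x1 x2 y2 w : V)
    (hx1v : x1 ≠ v) (hx2v : x2 ≠ v) (hy1v : y1 ≠ v) (hy2v : y2 ≠ v)
    (hx1y1 : x1 ≠ y1) (hx2y2 : x2 ≠ y2) (hx2x1 : x2 ≠ x1) (hx2y1 : x2 ≠ y1)
    (hy2x1 : y2 ≠ x1) (hy2y1 : y2 ≠ y1) (hwv : w ≠ v) :
    IsSpanningTree ⊤ (insert s(v,w) (insert s(x1,y1)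
      (((Finset.univ \ ({y1,v,x1,x2} : Finset V)).image (fun z => s(z, y1))) ∪ {s(x2,x1)}))) := by
  have heq : insert s(v,w) (insert s(x1,y1)
      (((Finset.univ \ ({y1,v,x1,x2} : Finset V)).image (fun z => s(z, y1))) ∪ {s(x2,x1)}))
      = pTree (fun z => if z = v then w else if z = x2 then x1 else y1) y1 := by
    rw [pTree_eq3 (Ne.symm hy1v) hx1y1 hx2y1 (Ne.symm hx1v) (Ne.symm hx2v) (Ne.symm hx2x1)
      _ (fun z _ h2 _ h4 => by simp [h2, h4]) (A := w) (B := y1) (X := x1)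
      (by simp) (by simp [hx1v, Ne.symm hx2x1]) (by simp [hx2v])]
    ext y
    simp only [Finset.mem_insert, Finset.mem_union, Finset.mem_singleton]
    tauto
  rw [heq]
  refine pTree_isSpanningTree _ y1
    (fun z => if z = y1 then 0 else if z = v then 10 else if z = x2 then 2 else 1)
    (by simp [hy1v, Ne.symm hx2y1]) ?_
  intro z hz
  by_cases h1 : z = v
  · by_cases h2 : w = y1 <;> by_cases h3 : w = x2 <;> simp [h1, h2, h3, hx1v, Ne.symm hx1v, hx2v, Ne.symm hx2v, hy1v, Ne.symm hy1v, hy2v, Ne.symm hy2v, hx1y1, Ne.symm hx1y1, hx2y2, Ne.symm hx2y2, hx2x1, Ne.symm hx2x1, hx2y1, Ne.symm hx2y1, hy2x1, Ne.symm hy2x1, hy2y1, Ne.symm hy2y1, hwv]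
  · by_cases h2 : z = x2
    · simp [h1, h2, hz, hx1v, Ne.symm hx1v, hx2v, Ne.symm hx2v, hy1v, Ne.symm hy1v, hy2v, Ne.symm hy2v, hx1y1, Ne.symm hx1y1, hx2y2, Ne.symm hx2y2, hx2x1, Ne.symm hx2x1, hx2y1, Ne.symm hx2y1, hy2x1, Ne.symm hy2x1, hy2y1, Ne.symm hy2y1, hwv]
    · simp [h1, h2, hz, hx1v, Ne.symm hx1v, hx2v, Ne.symm hx2v, hy1v, Ne.symm hy1v, hy2v, Ne.symm hy2v, hx1y1, Ne.symm hx1y1, hx2y2, Ne.symm hx2y2, hx2x1, Ne.symm hx2x1, hx2y1, Ne.symm hx2y1, hy2x1, Ne.symm hy2x1, hy2y1, Ne.symm hy2y1, hwv]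
set_option maxHeartbeats 1000000 in
lemma alpha1_tree2 (y1 v x1 x2 y2 w : V)
    (hx1v : x1 ≠ v) (hx2v : x2 ≠ v) (hy1v : y1 ≠ v) (hy2v : y2 ≠ v)
    (hx1y1 : x1 ≠ y1) (hx2y2 : x2 ≠ y2) (hx2x1 : x2 ≠ x1) (hx2y1 : x2 ≠ y1)
    (hy2x1 : y2 ≠ x1) (hy2y1 : y2 ≠ y1) (hwv : w ≠ v) :
    IsSpanningTree ⊤ (insert s(v,w) (insert s(x2,y2)
      (((Finset.univ \ ({y1,v,x1,x2} : Finset V)).image (fun z => s(z, y1))) ∪ {s(x2,x1)}))) := by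
  have heq : insert s(v,w) (insert s(x2,y2)
      (((Finset.univ \ ({y1,v,x1,x2} : Finset V)).image (fun z => s(z, y1))) ∪ {s(x2,x1)}))
      = pTree (fun z => if z = v then w else if z = x1 then x2 else if z = x2 then y2 else y1)
          y1 := by
    rw [pTree_eq3 (Ne.symm hy1v) hx1y1 hx2y1 (Ne.symm hx1v) (Ne.symm hx2v) (Ne.symm hx2x1)
      _ (fun z _ h2 h3 h4 => by simp [h2, h3, h4]) (A := w) (B := x2) (X := y2)
      (by simp) (by simp [hx1v]) (by simp [hx2v, hx2x1])]
    ext y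
    simp only [Finset.mem_insert, Finset.mem_union, Finset.mem_singleton]
    rw [show s(x1,x2) = s(x2,x1) from Sym2.eq_swap]
    tauto
  rw [heq]
  refine pTree_isSpanningTree _ y1
    (fun z => if z = y1 then 0 else if z = v then 10 else if z = x1 then 3
      else if z = x2 then 2 else 1)
    (by simp [hy1v, Ne.symm hx1y1, Ne.symm hx2y1]) ?_
  intro z hz
  by_cases h1 : z = v
  · by_cases h2 : w = y1 <;> by_cases h3 : w = x1 <;> by_cases h4 : w = x2 <;>
      simp [h1, h2, h3, h4, hx1v, Ne.symm hx1v, hx2v, Ne.symm hx2v, hy1v, Ne.symm hy1v, hy2v, Ne.symm hy2v, hx1y1, Ne.symm hx1y1, hx2y2, Ne.symm hx2y2, hx2x1, Ne.symm hx2x1, hx2y1, Ne.symm hx2y1, hy2x1, Ne.symm hy2x1, hy2y1, Ne.symm hy2y1, hwv]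
  · by_cases h2 : z = x1
    · simp [h1, h2, hz, hx1v, Ne.symm hx1v, hx2v, Ne.symm hx2v, hy1v, Ne.symm hy1v, hy2v, Ne.symm hy2v, hx1y1, Ne.symm hx1y1, hx2y2, Ne.symm hx2y2, hx2x1, Ne.symm hx2x1, hx2y1, Ne.symm hx2y1, hy2x1, Ne.symm hy2x1, hy2y1, Ne.symm hy2y1, hwv]
    · by_cases h3 : z = x2
      · simp [h1, h2, h3, hz, hx1v, Ne.symm hx1v, hx2v, Ne.symm hx2v, hy1v, Ne.symm hy1v, hy2v, Ne.symm hy2v, hx1y1, Ne.symm hx1y1, hx2y2, Ne.symm hx2y2, hx2x1, Ne.symm hx2x1, hx2y1, Ne.symm hx2y1, hy2x1, Ne.symm hy2x1, hy2y1, Ne.symm hy2y1, hwv]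
      · simp [h1, h2, h3, hz, hx1v, Ne.symm hx1v, hx2v, Ne.symm hx2v, hy1v, Ne.symm hy1v, hy2v, Ne.symm hy2v, hx1y1, Ne.symm hx1y1, hx2y2, Ne.symm hx2y2, hx2x1, Ne.symm hx2x1, hx2y1, Ne.symm hx2y1, hy2x1, Ne.symm hy2x1, hy2y1, Ne.symm hy2y1, hwv]

set_option maxHeartbeats 2000000 in
lemma config_alpha1 (hsymm : ∀ e f, Q e f = Q f e) (hc : IsLinearization ⊤ Q c)
    (y1 v x1 x2 y2 a' b' : V)
    (hx1v : x1 ≠ v) (hx2v : x2 ≠ v) (hy1v : y1 ≠ v) (hy2v : y2 ≠ v)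
    (hx1y1 : x1 ≠ y1) (hx2y2 : x2 ≠ y2) (hx2x1 : x2 ≠ x1) (hx2y1 : x2 ≠ y1)
    (hy2x1 : y2 ≠ x1) (hy2y1 : y2 ≠ y1)
    (hav : a' ≠ v) (hbv : b' ≠ v) (hab : a' ≠ b') :
    Q s(v,a') s(x1,y1) - Q s(v,b') s(x1,y1) = Q s(v,a') s(x2,y2) - Q s(v,b') s(x2,y2) := by
  set Gen : Finset (Sym2 V) :=
    (Finset.univ \ ({y1,v,x1,x2} : Finset V)).image (fun z => s(z, y1)) with hGen
  set S : Finset (Sym2 V) := Gen ∪ {s(x2,x1)} with hS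
  have hmemGen : ∀ E : Sym2 V, E ∈ Gen →
      ∃ z, z ≠ y1 ∧ z ≠ v ∧ z ≠ x1 ∧ z ≠ x2 ∧ E = s(z,y1) := by
    intro E hE
    rw [hGen, Finset.mem_image] at hE
    obtain ⟨z, hz, rfl⟩ := hE
    simp only [Finset.mem_sdiff, Finset.mem_univ, true_and, Finset.mem_insert,
      Finset.mem_singleton, not_or] at hz
    exact ⟨z, hz.1, hz.2.1, hz.2.2.1, hz.2.2.2, rfl⟩
  have hS1 : s(v,a') ∉ S := by
    rw [hS, Finset.mem_union, Finset.mem_singleton]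
    rintro (h | h)
    · obtain ⟨z, h1, h2, h3, h4, hE⟩ := hmemGen _ h
      rw [Sym2.eq_iff] at hE
      rcases hE with ⟨hh, hh'⟩ | ⟨hh, hh'⟩
      · exact h2 hh.symm
      · exact hy1v hh.symm
    · rw [Sym2.eq_iff] at h
      rcases h with ⟨hh, hh'⟩ | ⟨hh, hh'⟩
      · exact hx2v hh.symm
      · exact hx1v hh.symm
  have hS2 : s(v,b') ∉ S := by
    rw [hS, Finset.mem_union, Finset.mem_singleton]
    rintro (h | h)
    · obtain ⟨z, h1, h2, h3, h4, hE⟩ := hmemGen _ h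
      rw [Sym2.eq_iff] at hE
      rcases hE with ⟨hh, hh'⟩ | ⟨hh, hh'⟩
      · exact h2 hh.symm
      · exact hy1v hh.symm
    · rw [Sym2.eq_iff] at h
      rcases h with ⟨hh, hh'⟩ | ⟨hh, hh'⟩
      · exact hx2v hh.symm
      · exact hx1v hh.symm
  have hS3 : s(x1,y1) ∉ S := by
    rw [hS, Finset.mem_union, Finset.mem_singleton]
    rintro (h | h)
    · obtain ⟨z, h1, h2, h3, h4, hE⟩ := hmemGen _ h
      rw [Sym2.eq_iff] at hE
      rcases hE with ⟨hh, hh'⟩ | ⟨hh, hh'⟩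
      · exact h3 hh.symm
      · exact hx1y1 hh
    · rw [Sym2.eq_iff] at h
      rcases h with ⟨hh, hh'⟩ | ⟨hh, hh'⟩
      · exact hx2x1 hh.symm
      · exact hx2y1 hh'.symm
  have hS4 : s(x2,y2) ∉ S := by
    rw [hS, Finset.mem_union, Finset.mem_singleton]
    rintro (h | h)
    · obtain ⟨z, h1, h2, h3, h4, hE⟩ := hmemGen _ h
      rw [Sym2.eq_iff] at hE
      rcases hE with ⟨hh, hh'⟩ | ⟨hh, hh'⟩
      · exact hy2y1 hh'
      · exact hx2y1 hh
    · rw [Sym2.eq_iff] at h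
      rcases h with ⟨hh, hh'⟩ | ⟨hh, hh'⟩
      · exact hy2x1 hh'
      · exact hx2x1 hh
  have hd1 : s(v,a') ≠ s(x1,y1) := by
    rw [Ne, Sym2.eq_iff]
    rintro (⟨hh, hh'⟩ | ⟨hh, hh'⟩)
    · exact hx1v hh.symm
    · exact hy1v hh.symm
  have hd2 : s(v,a') ≠ s(x2,y2) := by
    rw [Ne, Sym2.eq_iff]
    rintro (⟨hh, hh'⟩ | ⟨hh, hh'⟩)
    · exact hx2v hh.symm
    · exact hy2v hh.symm
  have hd3 : s(v,b') ≠ s(x1,y1) := by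
    rw [Ne, Sym2.eq_iff]
    rintro (⟨hh, hh'⟩ | ⟨hh, hh'⟩)
    · exact hx1v hh.symm
    · exact hy1v hh.symm
  have hd4 : s(v,b') ≠ s(x2,y2) := by
    rw [Ne, Sym2.eq_iff]
    rintro (⟨hh, hh'⟩ | ⟨hh, hh'⟩)
    · exact hx2v hh.symm
    · exact hy2v hh.symm
  exact rectangle hsymm hc hS1 hS2 hS3 hS4 hd1 hd2 hd3 hd4
    (alpha1_tree1 y1 v x1 x2 y2 a' hx1v hx2v hy1v hy2v hx1y1 hx2y2 hx2x1 hx2y1 hy2x1 hy2y1 hav)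
    (alpha1_tree1 y1 v x1 x2 y2 b' hx1v hx2v hy1v hy2v hx1y1 hx2y2 hx2x1 hx2y1 hy2x1 hy2y1 hbv)
    (alpha1_tree2 y1 v x1 x2 y2 a' hx1v hx2v hy1v hy2v hx1y1 hx2y2 hx2x1 hx2y1 hy2x1 hy2y1 hav)
    (alpha1_tree2 y1 v x1 x2 y2 b' hx1v hx2v hy1v hy2v hx1y1 hx2y2 hx2x1 hx2y1 hy2x1 hy2y1 hbv)

set_option maxHeartbeats 1000000 in
lemma adj_constancy_off (hsymm : ∀ e f, Q e f = Q f e) (hc : IsLinearization ⊤ Q c)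
    (v a b : V) (hav : a ≠ v) (hbv : b ≠ v) (hab : a ≠ b) (G1 G2 : Sym2 V)
    (hnd1 : ¬ G1.IsDiag) (hnd2 : ¬ G2.IsDiag) (hv1 : v ∉ G1) (hv2 : v ∉ G2)
    (hGG : G1 ≠ G2) :
    Q s(v,a) G1 - Q s(v,b) G1 = Q s(v,a) G2 - Q s(v,b) G2 := by
  induction G1 using Sym2.ind with | _ x1 y1 => ?_
  induction G2 using Sym2.ind with | _ x2 y2 => ?_
  rw [Sym2.mk_isDiag_iff] at hnd1 hnd2
  have hx1v : x1 ≠ v := by rintro rfl; exact hv1 (Sym2.mem_mk_left _ _)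
  have hy1v : y1 ≠ v := by rintro rfl; exact hv1 (Sym2.mem_mk_right _ _)
  have hx2v : x2 ≠ v := by rintro rfl; exact hv2 (Sym2.mem_mk_left _ _)
  have hy2v : y2 ≠ v := by rintro rfl; exact hv2 (Sym2.mem_mk_right _ _)
  by_cases e1 : x2 = x1
  · subst e1
    have hy12 : y1 ≠ y2 := fun h => hGG (by rw [h])
    exact config_alpha0 hsymm hc y1 x2 v y2 a b hx2v hy1v hy2v
      (Ne.symm hnd1) (Ne.symm hnd2) hy12 hav hbv hab
  · by_cases e2 : x2 = y1
    · subst e2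
      have hx1y2 : x1 ≠ y2 := fun h => hGG (by rw [h]; exact Sym2.eq_swap)
      have H := config_alpha0 hsymm hc x1 x2 v y2 a b hx2v hx1v hy2v
        hnd1 (Ne.symm hnd2) hx1y2 hav hbv hab
      rwa [show s(x2,x1) = s(x1,x2) from Sym2.eq_swap] at H
    · by_cases e3 : y2 = x1
      · subst e3
        have H := config_alpha0 hsymm hc y1 y2 v x2 a b hy2v hy1v hx2v
          (Ne.symm hnd1) e1 (fun h => e2 h.symm) hav hbv hab
        rwa [show s(y2,x2) = s(x2,y2) from Sym2.eq_swap] at H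
      · by_cases e4 : y2 = y1
        · subst e4
          have H := config_alpha0 hsymm hc x1 y2 v x2 a b hy2v hx1v hx2v
            hnd1 e2 (fun h => e1 h.symm) hav hbv hab
          rwa [show s(y2,x1) = s(x1,y2) from Sym2.eq_swap,
            show s(y2,x2) = s(x2,y2) from Sym2.eq_swap] at H
        · exact config_alpha1 hsymm hc y1 v x1 x2 y2 a b hx1v hx2v hy1v hy2v
            hnd1 hnd2 e1 e2 e3 e4 hav hbv hab

set_option maxHeartbeats 1000000 in
lemma adj_constancy (hsymm : ∀ e f, Q e f = Q f e) (hc : IsLinearization ⊤ Q c)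
    (v a b : V) (hav : a ≠ v) (hbv : b ≠ v) (hab : a ≠ b) (G1 G2 : Sym2 V)
    (hnd1 : ¬ G1.IsDiag) (hnd2 : ¬ G2.IsDiag)
    (hG1e : G1 ≠ s(v,a)) (hG1e' : G1 ≠ s(v,b)) (hG2e : G2 ≠ s(v,a)) (hG2e' : G2 ≠ s(v,b))
    (hGG : G1 ≠ G2) :
    Q s(v,a) G1 - Q s(v,b) G1 = Q s(v,a) G2 - Q s(v,b) G2 := by
  -- helper: one beta step, from s(v,x) to s(a,x) or s(b,x)
  have beta1 : ∀ x : V, x ≠ v → x ≠ a → x ≠ b →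
      Q s(v,a) s(v,x) - Q s(v,b) s(v,x) = Q s(v,a) s(a,x) - Q s(v,b) s(a,x) :=
    fun x hxv hxa hxb => config_beta hsymm hc v a b x hav hbv hxv hab
      (fun h => hxa h.symm) (fun h => hxb h.symm)
  have beta2 : ∀ x : V, x ≠ v → x ≠ a → x ≠ b →
      Q s(v,a) s(v,x) - Q s(v,b) s(v,x) = Q s(v,a) s(b,x) - Q s(v,b) s(b,x) := by
    intro x hxv hxa hxb
    have H := config_beta hsymm hc v b a x hbv hav hxv (Ne.symm hab)
      (fun h => hxb h.symm) (fun h => hxa h.symm)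
    linarith
  by_cases hv1 : v ∈ G1
  · obtain ⟨x, rfl⟩ := Sym2.mem_iff_exists.mp hv1
    rw [Sym2.mk_isDiag_iff] at hnd1
    have hxv : x ≠ v := Ne.symm hnd1
    have hxa : x ≠ a := fun h => hG1e (by rw [h])
    have hxb : x ≠ b := fun h => hG1e' (by rw [h])
    by_cases hv2 : v ∈ G2
    · obtain ⟨y, rfl⟩ := Sym2.mem_iff_exists.mp hv2
      rw [Sym2.mk_isDiag_iff] at hnd2
      have hyv : y ≠ v := Ne.symm hnd2
      have hya : y ≠ a := fun h => hG2e (by rw [h])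
      have hyb : y ≠ b := fun h => hG2e' (by rw [h])
      have hxy : x ≠ y := fun h => hGG (by rw [h])
      have H1 := beta1 x hxv hxa hxb
      have H2 := beta1 y hyv hya hyb
      have H3 : Q s(v,a) s(a,x) - Q s(v,b) s(a,x) = Q s(v,a) s(a,y) - Q s(v,b) s(a,y) := by
        apply adj_constancy_off hsymm hc v a b hav hbv hab
        · rw [Sym2.mk_isDiag_iff]; exact Ne.symm hxa
        · rw [Sym2.mk_isDiag_iff]; exact Ne.symm hya
        · rw [Sym2.mem_iff]; rintro (h|h); exacts [hav h.symm, hxv h.symm]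
        · rw [Sym2.mem_iff]; rintro (h|h); exacts [hav h.symm, hyv h.symm]
        · rw [Ne, Sym2.eq_iff]
          rintro (⟨hh,hh'⟩|⟨hh,hh'⟩)
          · exact hxy hh'
          · exact hxa hh'
      linarith
    · -- G2 avoids v
      by_cases hq : G2 = s(a,x)
      · subst hq
        have H1 := beta2 x hxv hxa hxb
        have H3 : Q s(v,a) s(b,x) - Q s(v,b) s(b,x) = Q s(v,a) s(a,x) - Q s(v,b) s(a,x) := by
          apply adj_constancy_off hsymm hc v a b hav hbv hab
          · rw [Sym2.mk_isDiag_iff]; exact Ne.symm hxb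
          · rw [Sym2.mk_isDiag_iff]; exact Ne.symm hxa
          · rw [Sym2.mem_iff]; rintro (h|h); exacts [hbv h.symm, hxv h.symm]
          · rw [Sym2.mem_iff]; rintro (h|h); exacts [hav h.symm, hxv h.symm]
          · rw [Ne, Sym2.eq_iff]
            rintro (⟨hh,hh'⟩|⟨hh,hh'⟩)
            · exact hab hh.symm
            · exact hxa hh'
        linarith
      · have H1 := beta1 x hxv hxa hxb
        have H3 : Q s(v,a) s(a,x) - Q s(v,b) s(a,x) = Q s(v,a) G2 - Q s(v,b) G2 := by
          apply adj_constancy_off hsymm hc v a b hav hbv hab _ G2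
            (by rw [Sym2.mk_isDiag_iff]; exact Ne.symm hxa) hnd2
            (by rw [Sym2.mem_iff]; rintro (h|h); exacts [hav h.symm, hxv h.symm])
            hv2 (fun h => hq h.symm)
        linarith
  · by_cases hv2 : v ∈ G2
    · -- symmetric: v ∈ G2 only
      obtain ⟨x, rfl⟩ := Sym2.mem_iff_exists.mp hv2
      rw [Sym2.mk_isDiag_iff] at hnd2
      have hxv : x ≠ v := Ne.symm hnd2
      have hxa : x ≠ a := fun h => hG2e (by rw [h])
      have hxb : x ≠ b := fun h => hG2e' (by rw [h])
      by_cases hq : G1 = s(a,x)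
      · subst hq
        have H1 := beta2 x hxv hxa hxb
        have H3 : Q s(v,a) s(b,x) - Q s(v,b) s(b,x) = Q s(v,a) s(a,x) - Q s(v,b) s(a,x) := by
          apply adj_constancy_off hsymm hc v a b hav hbv hab
          · rw [Sym2.mk_isDiag_iff]; exact Ne.symm hxb
          · rw [Sym2.mk_isDiag_iff]; exact Ne.symm hxa
          · rw [Sym2.mem_iff]; rintro (h|h); exacts [hbv h.symm, hxv h.symm]
          · rw [Sym2.mem_iff]; rintro (h|h); exacts [hav h.symm, hxv h.symm]
          · rw [Ne, Sym2.eq_iff]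
            rintro (⟨hh,hh'⟩|⟨hh,hh'⟩)
            · exact hab hh.symm
            · exact hxa hh'
        linarith
      · have H1 := beta1 x hxv hxa hxb
        have H3 : Q s(v,a) s(a,x) - Q s(v,b) s(a,x) = Q s(v,a) G1 - Q s(v,b) G1 := by
          apply adj_constancy_off hsymm hc v a b hav hbv hab _ G1
            (by rw [Sym2.mk_isDiag_iff]; exact Ne.symm hxa) hnd1
            (by rw [Sym2.mem_iff]; rintro (h|h); exacts [hav h.symm, hxv h.symm])
            hv1 (fun h => hq h.symm)
        linarith
    · exact adj_constancy_off hsymm hc v a b hav hbv hab G1 G2 hnd1 hnd2 hv1 hv2 hGG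

set_option maxHeartbeats 1000000 in
lemma four_constancy (hsymm : ∀ e f, Q e f = Q f e) (hc : IsLinearization ⊤ Q c)
    (E1 E2 G1 G2 : Sym2 V)
    (h1 : ¬E1.IsDiag) (h2 : ¬E2.IsDiag) (h3 : ¬G1.IsDiag) (h4 : ¬G2.IsDiag)
    (hE : E1 ≠ E2) (hG : G1 ≠ G2)
    (h11 : E1 ≠ G1) (h12 : E1 ≠ G2) (h21 : E2 ≠ G1) (h22 : E2 ≠ G2) :
    Q E1 G1 - Q E2 G1 = Q E1 G2 - Q E2 G2 := by
  induction E1 using Sym2.ind with | _ a b => ?_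
  induction E2 using Sym2.ind with | _ c d => ?_
  rw [Sym2.mk_isDiag_iff] at h1 h2
  have step : ∀ u p q : V, p ≠ u → q ≠ u → p ≠ q →
      G1 ≠ s(u,p) → G1 ≠ s(u,q) → G2 ≠ s(u,p) → G2 ≠ s(u,q) →
      Q s(u,p) G1 - Q s(u,q) G1 = Q s(u,p) G2 - Q s(u,q) G2 :=
    fun u p q hp hq hpq k1 k2 k3 k4 =>
      adj_constancy hsymm hc u p q hp hq hpq G1 G2 h3 h4 k1 k2 k3 k4 hG
  by_cases hac : a = c
  · subst hac
    have hbd : b ≠ d := fun h => hE (by rw [h])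
    exact step a b d (Ne.symm h1) (Ne.symm h2) hbd
      (Ne.symm h11) (Ne.symm h21) (Ne.symm h12) (Ne.symm h22)
  · by_cases had : a = d
    · subst had
      have hbc : b ≠ c := fun h => hE (by rw [h]; exact Sym2.eq_swap)
      have H := step a b c (Ne.symm h1) (fun h => hac h.symm) hbc
        (Ne.symm h11) (by rw [show s(a,c) = s(c,a) from Sym2.eq_swap]; exact Ne.symm h21)
        (Ne.symm h12) (by rw [show s(a,c) = s(c,a) from Sym2.eq_swap]; exact Ne.symm h22)
      rwa [show s(a,c) = s(c,a) from Sym2.eq_swap] at H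
    · by_cases hbc : b = c
      · subst hbc
        have H := step b a d h1 (fun h => h2 h.symm) had
          (by rw [show s(b,a) = s(a,b) from Sym2.eq_swap]; exact Ne.symm h11)
          (Ne.symm h21)
          (by rw [show s(b,a) = s(a,b) from Sym2.eq_swap]; exact Ne.symm h12)
          (Ne.symm h22)
        rwa [show s(b,a) = s(a,b) from Sym2.eq_swap] at H
      · by_cases hbd : b = d
        · subst hbd
          have H := step b a c h1 (fun h => hbc h.symm) hac
            (by rw [show s(b,a) = s(a,b) from Sym2.eq_swap]; exact Ne.symm h11)
            (by rw [show s(b,c) = s(c,b) from Sym2.eq_swap]; exact Ne.symm h21)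
            (by rw [show s(b,a) = s(a,b) from Sym2.eq_swap]; exact Ne.symm h12)
            (by rw [show s(b,c) = s(c,b) from Sym2.eq_swap]; exact Ne.symm h22)
          rwa [show s(b,a) = s(a,b) from Sym2.eq_swap,
            show s(b,c) = s(c,b) from Sym2.eq_swap] at H
        · -- disjoint edges
          have core : ∀ p p' q q' : V, s(p,p') = s(a,b) → s(q,q') = s(c,d) →
              p' ≠ p → q ≠ p → p' ≠ q → q' ≠ q → p ≠ q' →
              G1 ≠ s(p,q) → G2 ≠ s(p,q) →
              Q s(a,b) G1 - Q s(c,d) G1 = Q s(a,b) G2 - Q s(c,d) G2 := by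
            intro p p' q q' hpp' hqq' d1 d2 d3 d4 d5 dG1 dG2
            have P1 := step p p' q d1 d2 d3
              (by rw [hpp']; exact Ne.symm h11) dG1
              (by rw [hpp']; exact Ne.symm h12) dG2
            have P2 := step q p q' (Ne.symm d2) d4 d5
              (by rw [show s(q,p) = s(p,q) from Sym2.eq_swap]; exact dG1)
              (by rw [hqq']; exact Ne.symm h21)
              (by rw [show s(q,p) = s(p,q) from Sym2.eq_swap]; exact dG2)
              (by rw [hqq']; exact Ne.symm h22)
            rw [hpp'] at P1
            rw [hqq', show s(q,p) = s(p,q) from Sym2.eq_swap] at P2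
            linarith
          by_cases k1 : G1 = s(b,c) ∨ G2 = s(b,c)
          · by_cases k2 : G1 = s(b,d) ∨ G2 = s(b,d)
            · -- use E'' = s(a,c)
              have nbcbd : s(b,c) ≠ s(b,d) := by
                rw [Ne, Sym2.eq_iff]
                rintro (⟨hh,hh'⟩|⟨hh,hh'⟩)
                · exact h2 hh'
                · exact hbd hh
              have n1 : s(b,c) ≠ s(a,c) := by
                rw [Ne, Sym2.eq_iff]
                rintro (⟨hh,hh'⟩|⟨hh,hh'⟩)
                · exact h1 hh.symm
                · exact hbc hh
              have n2 : s(b,d) ≠ s(a,c) := by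
                rw [Ne, Sym2.eq_iff]
                rintro (⟨hh,hh'⟩|⟨hh,hh'⟩)
                · exact h1 hh.symm
                · exact hbc hh
              obtain ⟨dG1, dG2⟩ : G1 ≠ s(a,c) ∧ G2 ≠ s(a,c) := by
                rcases k1 with hA|hA <;> rcases k2 with hB|hB
                · exact absurd (hA.symm.trans hB) nbcbd
                · exact ⟨by rw [hA]; exact n1, by rw [hB]; exact n2⟩
                · exact ⟨by rw [hB]; exact n2, by rw [hA]; exact n1⟩
                · exact absurd (hA.symm.trans hB) nbcbd
              exact core a b c d rfl rfl (fun h => h1 h.symm) (fun h => hac h.symm) hbc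
                (fun h => h2 h.symm) had dG1 dG2
            · push_neg at k2
              exact core b a d c Sym2.eq_swap Sym2.eq_swap h1
                (fun h => hbd h.symm) had h2 hbc k2.1 k2.2
          · push_neg at k1
            exact core b a c d Sym2.eq_swap rfl h1
              (fun h => hbc h.symm) hac (fun h => h2 h.symm) hbd k1.1 k1.2

set_option maxHeartbeats 2000000 in
lemma forward_exists (hsymm : ∀ e f, Q e f = Q f e) (hc : IsLinearization ⊤ Q c) :
    ∃ w : Sym2 V → ℝ, ∀ e f : Sym2 V, ¬e.IsDiag → ¬f.IsDiag → e ≠ f → Q e f = w e + w f := by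
  by_cases h3 : ∃ p q r : V, p ≠ q ∧ p ≠ r ∧ q ≠ r
  · obtain ⟨p, q, r, hpq, hpr, hqr⟩ := h3
    set b1 : Sym2 V := s(p,q) with hb1
    set b2 : Sym2 V := s(p,r) with hb2
    set g0 : Sym2 V := s(q,r) with hg0
    have ndb1 : ¬ b1.IsDiag := by rw [hb1, Sym2.mk_isDiag_iff]; exact hpq
    have ndb2 : ¬ b2.IsDiag := by rw [hb2, Sym2.mk_isDiag_iff]; exact hpr
    have ndg0 : ¬ g0.IsDiag := by rw [hg0, Sym2.mk_isDiag_iff]; exact hqr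
    have hb12 : b1 ≠ b2 := by
      rw [hb1, hb2, Ne, Sym2.eq_iff]
      rintro (⟨hh,hh'⟩|⟨hh,hh'⟩)
      · exact hqr hh'
      · exact hpr hh
    have hb1g0 : b1 ≠ g0 := by
      rw [hb1, hg0, Ne, Sym2.eq_iff]
      rintro (⟨hh,hh'⟩|⟨hh,hh'⟩)
      · exact hpq hh
      · exact hpr hh
    have hb2g0 : b2 ≠ g0 := by
      rw [hb2, hg0, Ne, Sym2.eq_iff]
      rintro (⟨hh,hh'⟩|⟨hh,hh'⟩)
      · exact hpq hh
      · exact hpr hh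
    set wg : Sym2 V → ℝ := fun e => (Q e b1 + Q e b2 - Q b1 b2)/2 with hwg
    set w : Sym2 V → ℝ := fun e =>
      if e = b1 then Q b1 g0 - wg g0 else if e = b2 then Q b2 g0 - wg g0 else wg e with hw
    have wb1 : w b1 = Q b1 g0 - wg g0 := by rw [hw]; simp
    have wb2 : w b2 = Q b2 g0 - wg g0 := by rw [hw]; simp [Ne.symm hb12]
    have wother : ∀ e, e ≠ b1 → e ≠ b2 → w e = wg e := by
      intro e h1 h2; rw [hw]; simp [h1, h2]
    -- main identity for e, f away from the base edges
    have main : ∀ e f : Sym2 V, ¬e.IsDiag → ¬f.IsDiag → e ≠ f → e ≠ b1 → e ≠ b2 →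
        f ≠ b1 → f ≠ b2 → Q e f = wg e + wg f := by
      intro e f hnde hndf hef heb1 heb2 hfb1 hfb2
      have A : Q e f - Q b1 f = Q e b2 - Q b1 b2 :=
        four_constancy hsymm hc e b1 f b2 hnde ndb1 hndf ndb2 heb1 hfb2 hef heb2
          (Ne.symm hfb1) hb12
      have B : Q e f - Q b2 f = Q e b1 - Q b2 b1 :=
        four_constancy hsymm hc e b2 f b1 hnde ndb2 hndf ndb1 heb2 (Ne.symm hfb1).symm hef heb1
          (Ne.symm hfb2) (Ne.symm hb12)
      have s1 := hsymm f b1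
      have s2 := hsymm f b2
      have s3 := hsymm b2 b1
      show Q e f = (Q e b1 + Q e b2 - Q b1 b2)/2 + ((Q f b1 + Q f b2 - Q b1 b2)/2)
      linarith
    have main2 : ∀ f : Sym2 V, ¬f.IsDiag → f ≠ b1 → f ≠ b2 → f ≠ g0 →
        (wg f - wg g0 = Q f b1 - Q g0 b1 ∧ wg f - wg g0 = Q f b2 - Q g0 b2) := by
      intro f hnd hfb1 hfb2 hfg0
      have A : Q f b1 - Q g0 b1 = Q f b2 - Q g0 b2 :=
        four_constancy hsymm hc f g0 b1 b2 hnd ndg0 ndb1 ndb2 hfg0 hb12 hfb1 hfb2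
          (Ne.symm hb1g0) (Ne.symm hb2g0)
      constructor
      · show (Q f b1 + Q f b2 - Q b1 b2)/2 - ((Q g0 b1 + Q g0 b2 - Q b1 b2)/2) = _
        linarith
      · show (Q f b1 + Q f b2 - Q b1 b2)/2 - ((Q g0 b1 + Q g0 b2 - Q b1 b2)/2) = _
        linarith
    refine ⟨w, ?_⟩
    have key : ∀ e f : Sym2 V, ¬e.IsDiag → ¬f.IsDiag → e ≠ f → Q e f = w e + w f := by
      intro e f hnde hndf hef
      by_cases heb1 : e = b1
      · subst heb1
        by_cases hfb2 : f = b2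
        · subst hfb2
          rw [wb1, wb2]
          have s1 := hsymm g0 b1
          have s2 := hsymm g0 b2
          show _ = (Q b1 g0 - (Q g0 b1 + Q g0 b2 - Q b1 b2)/2)
            + (Q b2 g0 - (Q g0 b1 + Q g0 b2 - Q b1 b2)/2)
          linarith
        · have hfb1 : f ≠ b1 := Ne.symm hef
          rw [wb1, wother f hfb1 hfb2]
          by_cases hfg0 : f = g0
          · subst hfg0; ring
          · have h2 := (main2 f hndf hfb1 hfb2 hfg0).1
            have s1 := hsymm f b1
            have s2 := hsymm g0 b1
            linarith
      · by_cases heb2 : e = b2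
        · subst heb2
          by_cases hfb1 : f = b1
          · subst hfb1
            rw [wb1, wb2]
            have s1 := hsymm g0 b1
            have s2 := hsymm g0 b2
            have s3 := hsymm b2 b1
            show _ = (Q b2 g0 - (Q g0 b1 + Q g0 b2 - Q b1 b2)/2)
              + (Q b1 g0 - (Q g0 b1 + Q g0 b2 - Q b1 b2)/2)
            linarith
          · have hfb2 : f ≠ b2 := Ne.symm hef
            rw [wb2, wother f hfb1 hfb2]
            by_cases hfg0 : f = g0
            · subst hfg0; ring
            · have h2 := (main2 f hndf hfb1 hfb2 hfg0).2
              have s1 := hsymm f b2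
              have s2 := hsymm g0 b2
              linarith
        · by_cases hfb1 : f = b1
          · subst hfb1
            rw [wb1, wother e heb1 heb2]
            by_cases heg0 : e = g0
            · subst heg0
              have s1 := hsymm g0 b1
              linarith
            · have h2 := (main2 e hnde heb1 heb2 heg0).1
              have s1 := hsymm g0 b1
              linarith
          · by_cases hfb2 : f = b2
            · subst hfb2
              rw [wb2, wother e heb1 heb2]
              by_cases heg0 : e = g0
              · subst heg0
                have s1 := hsymm g0 b2
                linarith
              · have h2 := (main2 e hnde heb1 heb2 heg0).2
                have s1 := hsymm g0 b2
                linarith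
            · rw [wother e heb1 heb2, wother f hfb1 hfb2]
              exact main e f hnde hndf hef heb1 heb2 hfb1 hfb2
    exact key
  · -- fewer than three distinct vertices: no two distinct edges exist
    refine ⟨0, ?_⟩
    intro e f hnde hndf hef
    exfalso
    induction e using Sym2.ind with | _ a b => ?_
    induction f using Sym2.ind with | _ cc d => ?_
    rw [Sym2.mk_isDiag_iff] at hnde hndf
    by_cases h5 : cc = a ∨ cc = b
    · by_cases h6 : d = a ∨ d = b
      · rcases h5 with h5|h5 <;> rcases h6 with h6|h6
        · exact hndf (h5.trans h6.symm)
        · exact hef (show s(a,b) = s(cc,d) by rw [h5, h6])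
        · exact hef (show s(a,b) = s(cc,d) by rw [h5, h6]; exact Sym2.eq_swap)
        · exact hndf (h5.trans h6.symm)
      · push_neg at h6
        exact h3 ⟨a, b, d, hnde, Ne.symm h6.1, Ne.symm h6.2⟩
    · push_neg at h5
      exact h3 ⟨a, b, cc, hnde, Ne.symm h5.1, Ne.symm h5.2⟩

set_option maxHeartbeats 1000000 in
lemma backward_lin (w : Sym2 V → ℝ)
    (hw : ∀ e f : Sym2 V, ¬e.IsDiag → ¬f.IsDiag → e ≠ f → Q e f = w e + w f) :
    IsLinearization ⊤ Q (fun e => Q e e + 2*((Fintype.card V : ℝ) - 2) * w e) := by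
  intro T hT
  obtain ⟨hsub, htree⟩ := hT
  have hnd : ∀ e ∈ T, ¬ e.IsDiag := by
    intro e he
    have := hsub he
    rwa [SimpleGraph.edgeSet_top, Set.mem_compl_iff, Sym2.mem_diagSet] at this
  haveI : Fintype ((SimpleGraph.fromEdgeSet (↑T : Set (Sym2 V))).edgeSet) := by
    rw [SimpleGraph.edgeSet_fromEdgeSet]
    exact (Set.Finite.diff T.finite_toSet).fintype
  have hEF : (SimpleGraph.fromEdgeSet (↑T : Set (Sym2 V))).edgeFinset = T := by
    ext e
    rw [SimpleGraph.mem_edgeFinset, SimpleGraph.edgeSet_fromEdgeSet, Set.mem_diff]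
    constructor
    · rintro ⟨h1, _⟩
      exact h1
    · intro h
      exact ⟨h, hnd e h⟩
  have hcard : T.card + 1 = Fintype.card V := by
    have := htree.card_edgeFinset
    rwa [hEF] at this
  rcases Finset.eq_empty_or_nonempty T with rfl | hne
  · simp [treeCost]
  have hc1 : 1 ≤ T.card := Finset.card_pos.mpr hne
  have hNC : ((Fintype.card V : ℝ)) = (T.card : ℝ) + 1 := by
    rw [← hcard]; push_cast; ring
  unfold treeCost
  have expand : ∀ e ∈ T, ∑ f ∈ T, Q e f
      = Q e e + (((T.card : ℝ) - 1) * w e + (∑ f ∈ T, w f - w e)) := by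
    intro e he
    rw [← Finset.add_sum_erase _ _ he]
    congr 1
    have step1 : ∀ f ∈ T.erase e, Q e f = w e + w f := by
      intro f hf
      obtain ⟨hfe, hfT⟩ := Finset.mem_erase.mp hf
      exact hw e f (hnd e he) (hnd f hfT) (Ne.symm hfe)
    rw [Finset.sum_congr rfl step1, Finset.sum_add_distrib, Finset.sum_const,
      Finset.card_erase_of_mem he, Finset.sum_erase_eq_sub he, nsmul_eq_mul]
    congr 2
    rw [Nat.cast_sub hc1]
    norm_num
  rw [Finset.sum_congr rfl expand, Finset.sum_add_distrib, Finset.sum_add_distrib,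
    ← Finset.mul_sum, Finset.sum_sub_distrib, Finset.sum_const, nsmul_eq_mul]
  have rhs : ∑ e ∈ T, (fun e => Q e e + 2*((Fintype.card V : ℝ) - 2) * w e) e
      = ∑ e ∈ T, Q e e + 2*((Fintype.card V : ℝ) - 2) * ∑ e ∈ T, w e := by
    rw [Finset.sum_add_distrib, ← Finset.mul_sum]
  rw [rhs, hNC]
  ring

end Config

end Aux

/-- On the complete graph, a symmetric cost matrix is linearizable iff it is a symmetric
weak sum matrix on the edges. -/
theorem complete_graph_linearizable_iff {V : Type*} [Fintype V]
    (Q : Sym2 V → Sym2 V → ℝ) (hsymm : ∀ e f, Q e f = Q f e) :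
    Linearizable (⊤ : SimpleGraph V) Q ↔
      ∃ w : Sym2 V → ℝ, ∀ e f : Sym2 V, e ∈ (⊤ : SimpleGraph V).edgeSet →
        f ∈ (⊤ : SimpleGraph V).edgeSet → e ≠ f → Q e f = w e + w f := by
  classical
  constructor
  · rintro ⟨c, hc⟩
    obtain ⟨w, hw⟩ := forward_exists hsymm hc
    refine ⟨w, fun e f he hf hef => hw e f ?_ ?_ hef⟩
    · rwa [SimpleGraph.edgeSet_top, Set.mem_compl_iff, Sym2.mem_diagSet] at he
    · rwa [SimpleGraph.edgeSet_top, Set.mem_compl_iff, Sym2.mem_diagSet] at hf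
  · rintro ⟨w, hw⟩
    refine ⟨_, backward_lin w (fun e f he hf hef => hw e f ?_ ?_ hef)⟩
    · rw [SimpleGraph.edgeSet_top, Set.mem_compl_iff, Sym2.mem_diagSet]; exact he
    · rw [SimpleGraph.edgeSet_top, Set.mem_compl_iff, Sym2.mem_diagSet]; exact hf
end

section
/- Let T be a spanning tree of a simple graph G and let e be an edge of G joining two vertices of T with e ∉ T. Then every cost matrix Q for the QMSTP on the graph H = T ∪ {e} is linearizable. -/
open Finset

theorem finiteV {V : Type*} (T : Finset (Sym2 V)) (h : (SimpleGraph.fromEdgeSet (↑T : Set (Sym2 V))).IsTree)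
    (x y : V) (hxy : x ≠ y) : Finite V := by
  have hK : (Set.univ : Set V) ⊆ ⋃ a ∈ (↑T : Set (Sym2 V)), {v | v ∈ a} := by
    intro v _
    have hvx : v ≠ x ∨ v ≠ y := by
      rcases eq_or_ne v x with rfl | h; · exact Or.inr hxy
      · exact Or.inl h
    obtain ⟨u, hvu⟩ : ∃ u, v ≠ u := hvx.elim (fun h => ⟨x, h⟩) (fun h => ⟨y, h⟩)
    obtain ⟨w⟩ := h.isConnected.preconnected v u
    cases w with
    | nil => exact absurd rfl hvu
    | cons ha p =>
      rw [SimpleGraph.fromEdgeSet_adj] at ha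
      exact Set.mem_biUnion ha.1 (Sym2.mem_mk_left _ _)
  have hfin : (⋃ a ∈ (↑T : Set (Sym2 V)), {v | v ∈ a}).Finite := by
    refine Set.Finite.biUnion T.finite_toSet fun a _ => ?_
    induction a with
    | _ u w =>
      refine Set.Finite.subset (Set.toFinite ({u, w} : Set V)) fun v hv => ?_
      simpa [Sym2.mem_iff] using hv
  rw [← Set.finite_univ_iff]
  exact hfin.subset hK

theorem edgeSet_eq {V : Type*} (G : SimpleGraph V) (S : Finset (Sym2 V)) (hS : ↑S ⊆ G.edgeSet) :
    (SimpleGraph.fromEdgeSet (↑S : Set (Sym2 V))).edgeSet = ↑S := by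
  rw [SimpleGraph.edgeSet_fromEdgeSet]
  ext a
  simp only [Set.mem_diff, Set.mem_setOf_eq, and_iff_left_iff_imp]
  exact fun ha => G.not_isDiag_of_mem_edgeSet (hS ha)

theorem card_of_tree {V : Type*} [Fintype V] [DecidableEq V] (G : SimpleGraph V) (S : Finset (Sym2 V))
    (hS : ↑S ⊆ G.edgeSet) (h : (SimpleGraph.fromEdgeSet (↑S : Set (Sym2 V))).IsTree) :
    S.card + 1 = Fintype.card V := by
  classical
  have h1 := edgeSet_eq G S hS
  have : Fintype ((SimpleGraph.fromEdgeSet (↑S : Set (Sym2 V))).edgeSet) := by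
    rw [h1]; infer_instance
  have h2 : (SimpleGraph.fromEdgeSet (↑S : Set (Sym2 V))).edgeFinset = S := by
    ext a; rw [SimpleGraph.mem_edgeFinset, h1]; rfl
  rw [← h2]
  exact h.card_edgeFinset

/-- Every cost matrix of the QMSTP on a spanning tree plus one extra edge is
linearizable. -/
theorem tree_plus_edge_linearizable {V : Type*} [DecidableEq V] (G : SimpleGraph V)
    (T : Finset (Sym2 V)) (hT : IsSpanningTree G T)
    (e : Sym2 V) (he : e ∈ G.edgeSet) (heT : e ∉ T)
    (Q : Sym2 V → Sym2 V → ℝ) :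
    Linearizable (SimpleGraph.fromEdgeSet (↑(insert e T) : Set (Sym2 V))) Q := by
  classical
  obtain ⟨x, y, hxy, -⟩ : ∃ x y : V, x ≠ y ∧ e = s(x, y) := by
    induction e with
    | _ u w => exact ⟨u, w, (G.mem_edgeSet.mp he).ne, rfl⟩
  have : Finite V := finiteV T hT.2 x y hxy
  cases nonempty_fintype V
  set E : Finset (Sym2 V) := insert e T with hE
  set H := SimpleGraph.fromEdgeSet (↑E : Set (Sym2 V)) with hH
  have hEG : ↑E ⊆ G.edgeSet := by
    rw [hE, Finset.coe_insert, Set.insert_subset_iff]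
    exact ⟨he, hT.1⟩
  have hHE : H.edgeSet = ↑E := edgeSet_eq G E hEG
  have hTcard : T.card + 1 = Fintype.card V := card_of_tree G T hT.1 hT.2
  -- every spanning tree of H is E.erase f for some f ∈ E with the erase a spanning tree
  have hchar : ∀ T' : Finset (Sym2 V), IsSpanningTree H T' →
      ∃ f ∈ E, IsSpanningTree H (E.erase f) ∧ T' = E.erase f := by
    intro T' hT'
    have hsub : T' ⊆ E := by
      intro a ha
      have := hT'.1 (Finset.mem_coe.mpr ha)
      rwa [hHE] at this
    have hc : T'.card + 1 = Fintype.card V := by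
      refine card_of_tree G T' ?_ hT'.2
      exact fun a ha => hEG (hsub (by exact_mod_cast ha))
    have hcard1 : (E \ T').card = 1 := by
      rw [Finset.card_sdiff_of_subset hsub]
      have hEc : E.card = T.card + 1 := Finset.card_insert_of_notMem heT
      omega
    obtain ⟨f, hf⟩ := Finset.card_eq_one.mp hcard1
    have hfE : f ∈ E := (Finset.mem_sdiff.mp (hf ▸ Finset.mem_singleton_self f)).1
    have hfT' : f ∉ T' := (Finset.mem_sdiff.mp (hf ▸ Finset.mem_singleton_self f)).2
    have hT'eq : T' = E.erase f := by
      ext a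
      constructor
      · intro ha
        exact Finset.mem_erase.mpr ⟨fun h => hfT' (h ▸ ha), hsub ha⟩
      · intro ha
        obtain ⟨hane, haE⟩ := Finset.mem_erase.mp ha
        by_contra haT'
        have : a ∈ E \ T' := Finset.mem_sdiff.mpr ⟨haE, haT'⟩
        rw [hf, Finset.mem_singleton] at this
        exact hane this
    exact ⟨f, hfE, hT'eq ▸ hT', hT'eq⟩
  set R : Finset (Sym2 V) := E.filter (fun f => IsSpanningTree H (E.erase f)) with hR
  have heR : e ∈ R := by
    rw [hR, Finset.mem_filter]
    refine ⟨Finset.mem_insert_self e T, ?_, ?_⟩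
    · rw [Finset.erase_insert heT, hHE]
      exact_mod_cast Finset.subset_insert e T
    · rw [Finset.erase_insert heT]
      exact hT.2
  set D : Sym2 V → ℝ := fun f => treeCost Q (E.erase f) with hD
  by_cases hn : 1 < R.card
  · -- general case
    set S : ℝ := (∑ f ∈ R, D f) / ((R.card : ℝ) - 1) with hS
    refine ⟨fun a => if a ∈ R then S - D a else 0, ?_⟩
    intro T' hT'
    obtain ⟨f, hfE, hfS, rfl⟩ := hchar T' hT'
    have hfR : f ∈ R := Finset.mem_filter.mpr ⟨hfE, hfS⟩
    have hsum : ∑ a ∈ E, (if a ∈ R then S - D a else 0) = ∑ a ∈ R, (S - D a) := by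
      rw [Finset.sum_ite_mem, Finset.inter_eq_right.mpr (Finset.filter_subset _ _)]
    have hEsum : ∑ a ∈ E.erase f, (if a ∈ R then S - D a else 0)
        = ∑ a ∈ R, (S - D a) - (S - D f) := by
      rw [← hsum, ← Finset.add_sum_erase E _ hfE, if_pos hfR]
      ring
    rw [hEsum, Finset.sum_sub_distrib, Finset.sum_const, nsmul_eq_mul]
    have hne : (R.card : ℝ) - 1 ≠ 0 := by
      have : (2 : ℝ) ≤ (R.card : ℝ) := by exact_mod_cast hn
      linarith
    have : ((R.card : ℝ) - 1) * S = ∑ f ∈ R, D f := by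
      rw [hS]; field_simp
    show D f = _
    linarith [this]
  · -- R = {e} : the only spanning tree is T
    have hRe : R = {e} := by
      have h1 : R.card = 1 := by
        have hpos : 0 < R.card := Finset.card_pos.mpr ⟨e, heR⟩
        omega
      obtain ⟨a, ha⟩ := Finset.card_eq_one.mp h1
      rw [ha] at heR ⊢
      rw [Finset.mem_singleton.mp heR]
    have hTpos : 0 < T.card := by
      have h2 : 2 ≤ Fintype.card V := Fintype.one_lt_card_iff_nontrivial.mpr ⟨⟨x, y, hxy⟩⟩
      omega
    refine ⟨fun a => if a ∈ T then D e / (T.card : ℝ) else 0, ?_⟩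
    intro T' hT'
    obtain ⟨f, hfE, hfS, rfl⟩ := hchar T' hT'
    have hfR : f ∈ R := Finset.mem_filter.mpr ⟨hfE, hfS⟩
    rw [hRe, Finset.mem_singleton] at hfR
    subst hfR
    have hTE : E.erase f = T := Finset.erase_insert heT
    rw [hTE]
    rw [Finset.sum_congr rfl (fun a ha => if_pos ha), Finset.sum_const, nsmul_eq_mul]
    have : treeCost Q T = D f := by rw [hD]; simp [hTE]
    rw [this]
    field_simp
end
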